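/- arXiv:1604.04989 — 13 statements merged into one kernel-verified Lean document; each statement's English description precedes it below -/
import Mathlib

section
/- Suppose u, a, b, c satisfy the 3A Griess relations. Set v = −(5/14)u + (16/21)(a + b + c). Then v·v = 2v, u·v = 0, (u|v) = 0, (v|v) = 3/7 (so v is a Virasoro-type idempotent of central charge 2(v|v) = 6/7 orthogonal to u), and (u + v)·w = 2w for every w in the linear span of {u, a, b, c} (i.e. u + v acts as twice the identity on the Griess algebra of the 3A-algebra). -/
/-- In the Griess algebra of the dihedral 3A-algebra (with its
characteristic `c = 4/5` Virasoro vector `u` and Ising vectors `a`, `b`, `c`),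
the vector `v = -(5/14)u + (16/21)(a+b+c)` satisfies `v·v = 2v`, `u·v = 0`,
`(u|v) = 0`, `(v|v) = 3/7`, and `u + v` acts as twice the identity on the
linear span of `{u, a, b, c}`. -/
theorem stmt_0 (V : Type*) [AddCommGroup V] [Module ℝ V]
    (mul : V →ₗ[ℝ] V →ₗ[ℝ] V)
    (hcomm : ∀ s t : V, mul s t = mul t s)
    (B : V →ₗ[ℝ] V →ₗ[ℝ] ℝ)
    (hsymm : ∀ s t : V, B s t = B t s)
    (u a b c : V)
    (huu : mul u u = (2 : ℝ) • u)
    (haa : mul a a = (2 : ℝ) • a)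
    (hbb : mul b b = (2 : ℝ) • b)
    (hcc : mul c c = (2 : ℝ) • c)
    (hab : mul a b = -(135 / 2 ^ 10 : ℝ) • u + (1 / 8 : ℝ) • (a + b) + (1 / 16 : ℝ) • c)
    (hbc : mul b c = -(135 / 2 ^ 10 : ℝ) • u + (1 / 8 : ℝ) • (b + c) + (1 / 16 : ℝ) • a)
    (hca : mul c a = -(135 / 2 ^ 10 : ℝ) • u + (1 / 8 : ℝ) • (c + a) + (1 / 16 : ℝ) • b)
    (hua : mul u a = (5 / 16 : ℝ) • u + (4 / 9 : ℝ) • a - (2 / 9 : ℝ) • (b + c))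
    (hub : mul u b = (5 / 16 : ℝ) • u + (4 / 9 : ℝ) • b - (2 / 9 : ℝ) • (c + a))
    (huc : mul u c = (5 / 16 : ℝ) • u + (4 / 9 : ℝ) • c - (2 / 9 : ℝ) • (a + b))
    (hBuu : B u u = 2 / 5)
    (hBaa : B a a = 1 / 4) (hBbb : B b b = 1 / 4) (hBcc : B c c = 1 / 4)
    (hBab : B a b = 13 / 2 ^ 10) (hBbc : B b c = 13 / 2 ^ 10) (hBca : B c a = 13 / 2 ^ 10)
    (hBua : B u a = 1 / 16) (hBub : B u b = 1 / 16) (hBuc : B u c = 1 / 16) :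
    ∀ v : V, v = -(5 / 14 : ℝ) • u + (16 / 21 : ℝ) • (a + b + c) →
      mul v v = (2 : ℝ) • v ∧
      mul u v = 0 ∧
      B u v = 0 ∧
      B v v = 3 / 7 ∧
      ∀ w ∈ Submodule.span ℝ ({u, a, b, c} : Set V), mul (u + v) w = (2 : ℝ) • w := by

  intro v hv
  have hba : mul b a = mul a b := hcomm b a
  have hcb : mul c b = mul b c := hcomm c b
  have hac : mul a c = mul c a := hcomm a c
  have hau : mul a u = mul u a := hcomm a u
  have hbu : mul b u = mul u b := hcomm b u
  have hcu : mul c u = mul u c := hcomm c u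
  have hBba : B b a = B a b := hsymm b a
  have hBcb : B c b = B b c := hsymm c b
  have hBac : B a c = B c a := hsymm a c
  have hBau : B a u = B u a := hsymm a u
  have hBbu : B b u = B u b := hsymm b u
  have hBcu : B c u = B u c := hsymm c u
  subst hv
  have e1 : mul (-(5 / 14 : ℝ) • u + (16 / 21 : ℝ) • (a + b + c))
      (-(5 / 14 : ℝ) • u + (16 / 21 : ℝ) • (a + b + c)) =
      (2 : ℝ) • (-(5 / 14 : ℝ) • u + (16 / 21 : ℝ) • (a + b + c)) := by
    simp only [map_add, map_smul, LinearMap.add_apply, LinearMap.smul_apply, LinearMap.map_add,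
      LinearMap.map_smul, huu, haa, hbb, hcc, hab, hbc, hca, hua, hub, huc, hba, hcb, hac,
      hau, hbu, hcu]
    module
  have e2 : mul u (-(5 / 14 : ℝ) • u + (16 / 21 : ℝ) • (a + b + c)) = 0 := by
    simp only [map_add, map_smul, LinearMap.add_apply, LinearMap.smul_apply, LinearMap.map_add,
      LinearMap.map_smul, huu, hua, hub, huc]
    module
  have e3 : B u (-(5 / 14 : ℝ) • u + (16 / 21 : ℝ) • (a + b + c)) = 0 := by
    simp only [map_add, map_smul, LinearMap.add_apply, LinearMap.smul_apply, LinearMap.map_add,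
      LinearMap.map_smul, hBuu, hBua, hBub, hBuc, smul_eq_mul]
    ring
  have e4 : B (-(5 / 14 : ℝ) • u + (16 / 21 : ℝ) • (a + b + c))
      (-(5 / 14 : ℝ) • u + (16 / 21 : ℝ) • (a + b + c)) = 3 / 7 := by
    simp only [map_add, map_smul, LinearMap.add_apply, LinearMap.smul_apply, LinearMap.map_add,
      LinearMap.map_smul, hBuu, hBaa, hBbb, hBcc, hBab, hBbc, hBca, hBua, hBub, hBuc,
      hBba, hBcb, hBac, hBau, hBbu, hBcu, smul_eq_mul]
    norm_num
  refine ⟨e1, e2, e3, e4, ?_⟩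
  intro w hw
  have key : ∀ x, x = u ∨ x = a ∨ x = b ∨ x = c →
      mul (u + (-(5 / 14 : ℝ) • u + (16 / 21 : ℝ) • (a + b + c))) x = (2 : ℝ) • x := by
    rintro x (rfl | rfl | rfl | rfl) <;>
    · simp only [map_add, map_smul, LinearMap.add_apply, LinearMap.smul_apply, LinearMap.map_add,
        LinearMap.map_smul, huu, haa, hbb, hcc, hab, hbc, hca, hua, hub, huc, hba, hcb, hac,
        hau, hbu, hcu]
      module
  induction hw using Submodule.span_induction with
  | mem x hx =>
    apply key
    simpa [Set.mem_insert_iff] using hx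
  | zero => simp
  | add x y _ _ hx hy => rw [LinearMap.map_add, hx, hy, smul_add]
  | smul r x _ hx => rw [LinearMap.map_smul, hx, smul_comm]
end

section
/- Suppose u, a, b, c satisfy the 3A Griess relations. For a τ_a-fixed vector w, the σ-involution of the Ising vector a is given on the Griess algebra by the formula σ_a(w) = w + 32(a|w)a − 4a·w. With this formula one has the two identities: u + 32(a|u)a − 4a·u = −(1/4)u + (2/9)a + (8/9)(b + c), and (b + c) + 32(a|b + c)a − 4a·(b + c) = (135/2^7)u − (3/16)a + (1/4)(b + c). -/
/-- In the Griess algebra of the dihedral 3A-algebra, the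
σ-involution formula `σ_a(w) = w + 32(a|w)a - 4a·w` yields
`σ_a(u) = -(1/4)u + (2/9)a + (8/9)(b+c)` and
`σ_a(b+c) = (135/2^7)u - (3/16)a + (1/4)(b+c)`. -/
theorem stmt_1 (V : Type*) [AddCommGroup V] [Module ℝ V]
    (mul : V →ₗ[ℝ] V →ₗ[ℝ] V)
    (hcomm : ∀ s t : V, mul s t = mul t s)
    (B : V →ₗ[ℝ] V →ₗ[ℝ] ℝ)
    (hsymm : ∀ s t : V, B s t = B t s)
    (u a b c : V)
    (huu : mul u u = (2 : ℝ) • u)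
    (haa : mul a a = (2 : ℝ) • a)
    (hbb : mul b b = (2 : ℝ) • b)
    (hcc : mul c c = (2 : ℝ) • c)
    (hab : mul a b = -(135 / 2 ^ 10 : ℝ) • u + (1 / 8 : ℝ) • (a + b) + (1 / 16 : ℝ) • c)
    (hbc : mul b c = -(135 / 2 ^ 10 : ℝ) • u + (1 / 8 : ℝ) • (b + c) + (1 / 16 : ℝ) • a)
    (hca : mul c a = -(135 / 2 ^ 10 : ℝ) • u + (1 / 8 : ℝ) • (c + a) + (1 / 16 : ℝ) • b)
    (hua : mul u a = (5 / 16 : ℝ) • u + (4 / 9 : ℝ) • a - (2 / 9 : ℝ) • (b + c))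
    (hub : mul u b = (5 / 16 : ℝ) • u + (4 / 9 : ℝ) • b - (2 / 9 : ℝ) • (c + a))
    (huc : mul u c = (5 / 16 : ℝ) • u + (4 / 9 : ℝ) • c - (2 / 9 : ℝ) • (a + b))
    (hBuu : B u u = 2 / 5)
    (hBaa : B a a = 1 / 4) (hBbb : B b b = 1 / 4) (hBcc : B c c = 1 / 4)
    (hBab : B a b = 13 / 2 ^ 10) (hBbc : B b c = 13 / 2 ^ 10) (hBca : B c a = 13 / 2 ^ 10)
    (hBua : B u a = 1 / 16) (hBub : B u b = 1 / 16) (hBuc : B u c = 1 / 16) :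
    u + (32 * B a u) • a - (4 : ℝ) • mul a u
        = -(1 / 4 : ℝ) • u + (2 / 9 : ℝ) • a + (8 / 9 : ℝ) • (b + c) ∧
    (b + c) + (32 * B a (b + c)) • a - (4 : ℝ) • mul a (b + c)
        = (135 / 2 ^ 7 : ℝ) • u - (3 / 16 : ℝ) • a + (1 / 4 : ℝ) • (b + c) := by
  constructor
  · rw [hcomm a u, hua, hsymm a u, hBua]
    module
  · have h1 : mul a (b + c) = mul a b + mul a c := by simp
    rw [h1, hab, hcomm a c, hca, map_add, hBab, hsymm a c, hBca]
    module
end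

section
/- Suppose u, x, e_0, …, e_5 satisfy the 6A Griess relations. Then e_0·(e_2·x) = −(45/2^10)u + (1/2^7)(7x + 11e_0 + e_1 + 5e_2 − 7e_3 + 3e_4 − e_5). (In the paper's labels a = e_0, b = e_2, c = e_4, a∘x = e_3, b∘x = e_5, c∘x = e_1, this is the identity a·(b·x) = −(45/2^10)u + (1/2^7)(7x + 11a + 5b + 3c − 7a∘x − b∘x + c∘x) of Lemma 2.14.) -/
/-- In the Griess algebra of the dihedral 6A-algebra (central
Ising vector `x`, characteristic `c = 4/5` Virasoro vector `u`, Ising vectors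
`e 0, …, e 5` indexed mod 6), one has the first identity of Lemma 2.14:
`e_0·(e_2·x) = -(45/2^10)u + (1/2^7)(7x + 11e_0 + e_1 + 5e_2 - 7e_3 + 3e_4 - e_5)`. -/
theorem stmt_2 (V : Type*) [AddCommGroup V] [Module ℝ V]
    (mul : V →ₗ[ℝ] V →ₗ[ℝ] V)
    (hcomm : ∀ s t : V, mul s t = mul t s)
    (B : V →ₗ[ℝ] V →ₗ[ℝ] ℝ)
    (hsymm : ∀ s t : V, B s t = B t s)
    (u x : V) (e : ZMod 6 → V)
    (huu : mul u u = (2 : ℝ) • u)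
    (hxx : mul x x = (2 : ℝ) • x)
    (hee : ∀ i : ZMod 6, mul (e i) (e i) = (2 : ℝ) • e i)
    (hux : mul u x = 0)
    (hue : ∀ i : ZMod 6, mul u (e i)
        = (5 / 16 : ℝ) • u + (4 / 9 : ℝ) • e i - (2 / 9 : ℝ) • (e (i + 2) + e (i + 4)))
    (hxe : ∀ i : ZMod 6, mul x (e i) = (1 / 4 : ℝ) • (x + e i - e (i + 3)))
    (he1 : ∀ i : ZMod 6, mul (e i) (e (i + 1))
        = (45 / 2 ^ 10 : ℝ) • u + (1 / 2 ^ 5 : ℝ) •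
            (x + e i + e (i + 1) - e (i + 2) - e (i + 3) - e (i + 4) - e (i + 5)))
    (he2 : ∀ i : ZMod 6, mul (e i) (e (i + 2))
        = -(135 / 2 ^ 10 : ℝ) • u + (1 / 8 : ℝ) • (e i + e (i + 2)) + (1 / 16 : ℝ) • e (i + 4))
    (he3 : ∀ i : ZMod 6, mul (e i) (e (i + 3)) = (1 / 4 : ℝ) • (e i + e (i + 3) - x))
    (hBuu : B u u = 2 / 5)
    (hBxx : B x x = 1 / 4)
    (hBee : ∀ i : ZMod 6, B (e i) (e i) = 1 / 4)
    (hBux : B u x = 0)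
    (hBue : ∀ i : ZMod 6, B u (e i) = 1 / 16)
    (hBxe : ∀ i : ZMod 6, B x (e i) = 1 / 32)
    (hBe1 : ∀ i : ZMod 6, B (e i) (e (i + 1)) = 5 / 2 ^ 10)
    (hBe2 : ∀ i : ZMod 6, B (e i) (e (i + 2)) = 13 / 2 ^ 10)
    (hBe3 : ∀ i : ZMod 6, B (e i) (e (i + 3)) = 1 / 32) :
    mul (e 0) (mul (e 2) x)
      = -(45 / 2 ^ 10 : ℝ) • u + (1 / 2 ^ 7 : ℝ) •
          ((7 : ℝ) • x + (11 : ℝ) • e 0 + e 1 + (5 : ℝ) • e 2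
            - (7 : ℝ) • e 3 + (3 : ℝ) • e 4 - e 5) := by
  have h2x : mul (e 2) x = (1/4:ℝ) • (x + e 2 - e 5) := by
    rw [hcomm]
    have h := hxe 2
    rw [show (2 + 3 : ZMod 6) = 5 by decide] at h
    exact h
  have h0x : mul (e 0) x = (1/4:ℝ) • (x + e 0 - e 3) := by
    rw [hcomm]
    have h := hxe 0
    rw [show (0 + 3 : ZMod 6) = 3 by decide] at h
    exact h
  have h02 : mul (e 0) (e 2) = -(135 / 2 ^ 10 : ℝ) • u + (1 / 8 : ℝ) • (e 0 + e 2)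
      + (1 / 16 : ℝ) • e 4 := by
    have h := he2 0
    rw [show (0 + 2 : ZMod 6) = 2 by decide, show (0 + 4 : ZMod 6) = 4 by decide] at h
    exact h
  have h05 : mul (e 0) (e 5) = (45 / 2 ^ 10 : ℝ) • u + (1 / 2 ^ 5 : ℝ) •
      (x + e 5 + e 0 - e 1 - e 2 - e 3 - e 4) := by
    rw [hcomm]
    have h := he1 5
    rw [show (5 + 1 : ZMod 6) = 0 by decide, show (5 + 2 : ZMod 6) = 1 by decide,
      show (5 + 3 : ZMod 6) = 2 by decide, show (5 + 4 : ZMod 6) = 3 by decide,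
      show (5 + 5 : ZMod 6) = 4 by decide] at h
    exact h
  rw [h2x, map_smul, map_sub, map_add, h0x, h02, h05]
  module
end

section
/- Suppose u, x, e_0, …, e_5 satisfy the 6A Griess relations. Set f = −(15/56)u + (1/2)x − (2/21)(e_0 + e_2 + e_4) + (2/3)(e_1 + e_3 + e_5). Then f·f = 2f and (f|f) = 25/56 (so f is a Virasoro-type idempotent of central charge 2(f|f) = 25/28), and f annihilates and is orthogonal to the Griess algebra of the 3A-subalgebra spanned by u, e_0, e_2, e_4: f·u = 0, f·e_0 = f·e_2 = f·e_4 = 0, (f|u) = 0, and (f|e_0) = (f|e_2) = (f|e_4) = 0. (This is the c = 25/28 Virasoro vector of Theorem 2.13(8) generating the commutant of the 3A-subalgebra of the 6A-algebra.) -/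
set_option maxHeartbeats 4000000


/-- In the Griess algebra of the dihedral 6A-algebra, the vector
`f = -(15/56)u + (1/2)x - (2/21)(e_0+e_2+e_4) + (2/3)(e_1+e_3+e_5)` is an
idempotent (`f·f = 2f`) with `(f|f) = 25/56` (central charge `25/28`), and it
annihilates and is orthogonal to the 3A-subalgebra spanned by `u, e_0, e_2, e_4`.
(Theorem 2.13(8).) -/
theorem stmt_4 (V : Type*) [AddCommGroup V] [Module ℝ V]
    (mul : V →ₗ[ℝ] V →ₗ[ℝ] V)
    (hcomm : ∀ s t : V, mul s t = mul t s)
    (B : V →ₗ[ℝ] V →ₗ[ℝ] ℝ)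
    (hsymm : ∀ s t : V, B s t = B t s)
    (u x : V) (e : ZMod 6 → V)
    (huu : mul u u = (2 : ℝ) • u)
    (hxx : mul x x = (2 : ℝ) • x)
    (hee : ∀ i : ZMod 6, mul (e i) (e i) = (2 : ℝ) • e i)
    (hux : mul u x = 0)
    (hue : ∀ i : ZMod 6, mul u (e i)
        = (5 / 16 : ℝ) • u + (4 / 9 : ℝ) • e i - (2 / 9 : ℝ) • (e (i + 2) + e (i + 4)))
    (hxe : ∀ i : ZMod 6, mul x (e i) = (1 / 4 : ℝ) • (x + e i - e (i + 3)))
    (he1 : ∀ i : ZMod 6, mul (e i) (e (i + 1))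
        = (45 / 2 ^ 10 : ℝ) • u + (1 / 2 ^ 5 : ℝ) •
            (x + e i + e (i + 1) - e (i + 2) - e (i + 3) - e (i + 4) - e (i + 5)))
    (he2 : ∀ i : ZMod 6, mul (e i) (e (i + 2))
        = -(135 / 2 ^ 10 : ℝ) • u + (1 / 8 : ℝ) • (e i + e (i + 2)) + (1 / 16 : ℝ) • e (i + 4))
    (he3 : ∀ i : ZMod 6, mul (e i) (e (i + 3)) = (1 / 4 : ℝ) • (e i + e (i + 3) - x))
    (hBuu : B u u = 2 / 5)
    (hBxx : B x x = 1 / 4)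
    (hBee : ∀ i : ZMod 6, B (e i) (e i) = 1 / 4)
    (hBux : B u x = 0)
    (hBue : ∀ i : ZMod 6, B u (e i) = 1 / 16)
    (hBxe : ∀ i : ZMod 6, B x (e i) = 1 / 32)
    (hBe1 : ∀ i : ZMod 6, B (e i) (e (i + 1)) = 5 / 2 ^ 10)
    (hBe2 : ∀ i : ZMod 6, B (e i) (e (i + 2)) = 13 / 2 ^ 10)
    (hBe3 : ∀ i : ZMod 6, B (e i) (e (i + 3)) = 1 / 32) :
    ∀ f : V, f = -(15 / 56 : ℝ) • u + (1 / 2 : ℝ) • x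
        - (2 / 21 : ℝ) • (e 0 + e 2 + e 4) + (2 / 3 : ℝ) • (e 1 + e 3 + e 5) →
      mul f f = (2 : ℝ) • f ∧
      B f f = 25 / 56 ∧
      mul f u = 0 ∧ mul f (e 0) = 0 ∧ mul f (e 2) = 0 ∧ mul f (e 4) = 0 ∧
      B f u = 0 ∧ B f (e 0) = 0 ∧ B f (e 2) = 0 ∧ B f (e 4) = 0 := by
  intro f hf
  subst hf
  have pue0 : mul u (e 0) = (5 / 16 : ℝ) • u + (4 / 9 : ℝ) • e 0 - (2 / 9 : ℝ) • (e 2 + e 4) := by have h := hue 0; simp only [show ((0:ZMod 6) + 2) = 2 by decide, show ((0:ZMod 6) + 4) = 4 by decide] at h; exact h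
  have peu0 : mul (e 0) u = (5 / 16 : ℝ) • u + (4 / 9 : ℝ) • e 0 - (2 / 9 : ℝ) • (e 2 + e 4) := by rw [hcomm]; exact pue0
  have pue1 : mul u (e 1) = (5 / 16 : ℝ) • u + (4 / 9 : ℝ) • e 1 - (2 / 9 : ℝ) • (e 3 + e 5) := by have h := hue 1; simp only [show ((1:ZMod 6) + 2) = 3 by decide, show ((1:ZMod 6) + 4) = 5 by decide] at h; exact h
  have peu1 : mul (e 1) u = (5 / 16 : ℝ) • u + (4 / 9 : ℝ) • e 1 - (2 / 9 : ℝ) • (e 3 + e 5) := by rw [hcomm]; exact pue1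
  have pue2 : mul u (e 2) = (5 / 16 : ℝ) • u + (4 / 9 : ℝ) • e 2 - (2 / 9 : ℝ) • (e 4 + e 0) := by have h := hue 2; simp only [show ((2:ZMod 6) + 2) = 4 by decide, show ((2:ZMod 6) + 4) = 0 by decide] at h; exact h
  have peu2 : mul (e 2) u = (5 / 16 : ℝ) • u + (4 / 9 : ℝ) • e 2 - (2 / 9 : ℝ) • (e 4 + e 0) := by rw [hcomm]; exact pue2
  have pue3 : mul u (e 3) = (5 / 16 : ℝ) • u + (4 / 9 : ℝ) • e 3 - (2 / 9 : ℝ) • (e 5 + e 1) := by have h := hue 3; simp only [show ((3:ZMod 6) + 2) = 5 by decide, show ((3:ZMod 6) + 4) = 1 by decide] at h; exact h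
  have peu3 : mul (e 3) u = (5 / 16 : ℝ) • u + (4 / 9 : ℝ) • e 3 - (2 / 9 : ℝ) • (e 5 + e 1) := by rw [hcomm]; exact pue3
  have pue4 : mul u (e 4) = (5 / 16 : ℝ) • u + (4 / 9 : ℝ) • e 4 - (2 / 9 : ℝ) • (e 0 + e 2) := by have h := hue 4; simp only [show ((4:ZMod 6) + 2) = 0 by decide, show ((4:ZMod 6) + 4) = 2 by decide] at h; exact h
  have peu4 : mul (e 4) u = (5 / 16 : ℝ) • u + (4 / 9 : ℝ) • e 4 - (2 / 9 : ℝ) • (e 0 + e 2) := by rw [hcomm]; exact pue4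
  have pue5 : mul u (e 5) = (5 / 16 : ℝ) • u + (4 / 9 : ℝ) • e 5 - (2 / 9 : ℝ) • (e 1 + e 3) := by have h := hue 5; simp only [show ((5:ZMod 6) + 2) = 1 by decide, show ((5:ZMod 6) + 4) = 3 by decide] at h; exact h
  have peu5 : mul (e 5) u = (5 / 16 : ℝ) • u + (4 / 9 : ℝ) • e 5 - (2 / 9 : ℝ) • (e 1 + e 3) := by rw [hcomm]; exact pue5
  have pxe0 : mul x (e 0) = (1 / 4 : ℝ) • (x + e 0 - e 3) := by have h := hxe 0; simp only [show ((0:ZMod 6) + 3) = 3 by decide] at h; exact h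
  have pex0 : mul (e 0) x = (1 / 4 : ℝ) • (x + e 0 - e 3) := by rw [hcomm]; exact pxe0
  have pxe1 : mul x (e 1) = (1 / 4 : ℝ) • (x + e 1 - e 4) := by have h := hxe 1; simp only [show ((1:ZMod 6) + 3) = 4 by decide] at h; exact h
  have pex1 : mul (e 1) x = (1 / 4 : ℝ) • (x + e 1 - e 4) := by rw [hcomm]; exact pxe1
  have pxe2 : mul x (e 2) = (1 / 4 : ℝ) • (x + e 2 - e 5) := by have h := hxe 2; simp only [show ((2:ZMod 6) + 3) = 5 by decide] at h; exact h
  have pex2 : mul (e 2) x = (1 / 4 : ℝ) • (x + e 2 - e 5) := by rw [hcomm]; exact pxe2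
  have pxe3 : mul x (e 3) = (1 / 4 : ℝ) • (x + e 3 - e 0) := by have h := hxe 3; simp only [show ((3:ZMod 6) + 3) = 0 by decide] at h; exact h
  have pex3 : mul (e 3) x = (1 / 4 : ℝ) • (x + e 3 - e 0) := by rw [hcomm]; exact pxe3
  have pxe4 : mul x (e 4) = (1 / 4 : ℝ) • (x + e 4 - e 1) := by have h := hxe 4; simp only [show ((4:ZMod 6) + 3) = 1 by decide] at h; exact h
  have pex4 : mul (e 4) x = (1 / 4 : ℝ) • (x + e 4 - e 1) := by rw [hcomm]; exact pxe4
  have pxe5 : mul x (e 5) = (1 / 4 : ℝ) • (x + e 5 - e 2) := by have h := hxe 5; simp only [show ((5:ZMod 6) + 3) = 2 by decide] at h; exact h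
  have pex5 : mul (e 5) x = (1 / 4 : ℝ) • (x + e 5 - e 2) := by rw [hcomm]; exact pxe5
  have pxu : mul x u = 0 := by rw [hcomm]; exact hux
  have pe00 : mul (e 0) (e 0) = (2 : ℝ) • e 0 := hee 0
  have pe01 : mul (e 0) (e 1) = (45 / 2 ^ 10 : ℝ) • u + (1 / 2 ^ 5 : ℝ) • (x + e 0 + e 1 - e 2 - e 3 - e 4 - e 5) := by have h := he1 0; simp only [show ((0:ZMod 6) + 1) = 1 by decide, show ((0:ZMod 6) + 2) = 2 by decide, show ((0:ZMod 6) + 3) = 3 by decide, show ((0:ZMod 6) + 4) = 4 by decide, show ((0:ZMod 6) + 5) = 5 by decide] at h; exact h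
  have pe02 : mul (e 0) (e 2) = -(135 / 2 ^ 10 : ℝ) • u + (1 / 8 : ℝ) • (e 0 + e 2) + (1 / 16 : ℝ) • e 4 := by have h := he2 0; simp only [show ((0:ZMod 6) + 1) = 1 by decide, show ((0:ZMod 6) + 2) = 2 by decide, show ((0:ZMod 6) + 3) = 3 by decide, show ((0:ZMod 6) + 4) = 4 by decide, show ((0:ZMod 6) + 5) = 5 by decide] at h; exact h
  have pe03 : mul (e 0) (e 3) = (1 / 4 : ℝ) • (e 0 + e 3 - x) := by have h := he3 0; simp only [show ((0:ZMod 6) + 1) = 1 by decide, show ((0:ZMod 6) + 2) = 2 by decide, show ((0:ZMod 6) + 3) = 3 by decide, show ((0:ZMod 6) + 4) = 4 by decide, show ((0:ZMod 6) + 5) = 5 by decide] at h; exact h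
  have pe11 : mul (e 1) (e 1) = (2 : ℝ) • e 1 := hee 1
  have pe12 : mul (e 1) (e 2) = (45 / 2 ^ 10 : ℝ) • u + (1 / 2 ^ 5 : ℝ) • (x + e 1 + e 2 - e 3 - e 4 - e 5 - e 0) := by have h := he1 1; simp only [show ((1:ZMod 6) + 1) = 2 by decide, show ((1:ZMod 6) + 2) = 3 by decide, show ((1:ZMod 6) + 3) = 4 by decide, show ((1:ZMod 6) + 4) = 5 by decide, show ((1:ZMod 6) + 5) = 0 by decide] at h; exact h
  have pe13 : mul (e 1) (e 3) = -(135 / 2 ^ 10 : ℝ) • u + (1 / 8 : ℝ) • (e 1 + e 3) + (1 / 16 : ℝ) • e 5 := by have h := he2 1; simp only [show ((1:ZMod 6) + 1) = 2 by decide, show ((1:ZMod 6) + 2) = 3 by decide, show ((1:ZMod 6) + 3) = 4 by decide, show ((1:ZMod 6) + 4) = 5 by decide, show ((1:ZMod 6) + 5) = 0 by decide] at h; exact h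
  have pe14 : mul (e 1) (e 4) = (1 / 4 : ℝ) • (e 1 + e 4 - x) := by have h := he3 1; simp only [show ((1:ZMod 6) + 1) = 2 by decide, show ((1:ZMod 6) + 2) = 3 by decide, show ((1:ZMod 6) + 3) = 4 by decide, show ((1:ZMod 6) + 4) = 5 by decide, show ((1:ZMod 6) + 5) = 0 by decide] at h; exact h
  have pe22 : mul (e 2) (e 2) = (2 : ℝ) • e 2 := hee 2
  have pe23 : mul (e 2) (e 3) = (45 / 2 ^ 10 : ℝ) • u + (1 / 2 ^ 5 : ℝ) • (x + e 2 + e 3 - e 4 - e 5 - e 0 - e 1) := by have h := he1 2; simp only [show ((2:ZMod 6) + 1) = 3 by decide, show ((2:ZMod 6) + 2) = 4 by decide, show ((2:ZMod 6) + 3) = 5 by decide, show ((2:ZMod 6) + 4) = 0 by decide, show ((2:ZMod 6) + 5) = 1 by decide] at h; exact h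
  have pe24 : mul (e 2) (e 4) = -(135 / 2 ^ 10 : ℝ) • u + (1 / 8 : ℝ) • (e 2 + e 4) + (1 / 16 : ℝ) • e 0 := by have h := he2 2; simp only [show ((2:ZMod 6) + 1) = 3 by decide, show ((2:ZMod 6) + 2) = 4 by decide, show ((2:ZMod 6) + 3) = 5 by decide, show ((2:ZMod 6) + 4) = 0 by decide, show ((2:ZMod 6) + 5) = 1 by decide] at h; exact h
  have pe25 : mul (e 2) (e 5) = (1 / 4 : ℝ) • (e 2 + e 5 - x) := by have h := he3 2; simp only [show ((2:ZMod 6) + 1) = 3 by decide, show ((2:ZMod 6) + 2) = 4 by decide, show ((2:ZMod 6) + 3) = 5 by decide, show ((2:ZMod 6) + 4) = 0 by decide, show ((2:ZMod 6) + 5) = 1 by decide] at h; exact h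
  have pe30 : mul (e 3) (e 0) = (1 / 4 : ℝ) • (e 3 + e 0 - x) := by have h := he3 3; simp only [show ((3:ZMod 6) + 1) = 4 by decide, show ((3:ZMod 6) + 2) = 5 by decide, show ((3:ZMod 6) + 3) = 0 by decide, show ((3:ZMod 6) + 4) = 1 by decide, show ((3:ZMod 6) + 5) = 2 by decide] at h; exact h
  have pe33 : mul (e 3) (e 3) = (2 : ℝ) • e 3 := hee 3
  have pe34 : mul (e 3) (e 4) = (45 / 2 ^ 10 : ℝ) • u + (1 / 2 ^ 5 : ℝ) • (x + e 3 + e 4 - e 5 - e 0 - e 1 - e 2) := by have h := he1 3; simp only [show ((3:ZMod 6) + 1) = 4 by decide, show ((3:ZMod 6) + 2) = 5 by decide, show ((3:ZMod 6) + 3) = 0 by decide, show ((3:ZMod 6) + 4) = 1 by decide, show ((3:ZMod 6) + 5) = 2 by decide] at h; exact h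
  have pe35 : mul (e 3) (e 5) = -(135 / 2 ^ 10 : ℝ) • u + (1 / 8 : ℝ) • (e 3 + e 5) + (1 / 16 : ℝ) • e 1 := by have h := he2 3; simp only [show ((3:ZMod 6) + 1) = 4 by decide, show ((3:ZMod 6) + 2) = 5 by decide, show ((3:ZMod 6) + 3) = 0 by decide, show ((3:ZMod 6) + 4) = 1 by decide, show ((3:ZMod 6) + 5) = 2 by decide] at h; exact h
  have pe40 : mul (e 4) (e 0) = -(135 / 2 ^ 10 : ℝ) • u + (1 / 8 : ℝ) • (e 4 + e 0) + (1 / 16 : ℝ) • e 2 := by have h := he2 4; simp only [show ((4:ZMod 6) + 1) = 5 by decide, show ((4:ZMod 6) + 2) = 0 by decide, show ((4:ZMod 6) + 3) = 1 by decide, show ((4:ZMod 6) + 4) = 2 by decide, show ((4:ZMod 6) + 5) = 3 by decide] at h; exact h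
  have pe41 : mul (e 4) (e 1) = (1 / 4 : ℝ) • (e 4 + e 1 - x) := by have h := he3 4; simp only [show ((4:ZMod 6) + 1) = 5 by decide, show ((4:ZMod 6) + 2) = 0 by decide, show ((4:ZMod 6) + 3) = 1 by decide, show ((4:ZMod 6) + 4) = 2 by decide, show ((4:ZMod 6) + 5) = 3 by decide] at h; exact h
  have pe44 : mul (e 4) (e 4) = (2 : ℝ) • e 4 := hee 4
  have pe45 : mul (e 4) (e 5) = (45 / 2 ^ 10 : ℝ) • u + (1 / 2 ^ 5 : ℝ) • (x + e 4 + e 5 - e 0 - e 1 - e 2 - e 3) := by have h := he1 4; simp only [show ((4:ZMod 6) + 1) = 5 by decide, show ((4:ZMod 6) + 2) = 0 by decide, show ((4:ZMod 6) + 3) = 1 by decide, show ((4:ZMod 6) + 4) = 2 by decide, show ((4:ZMod 6) + 5) = 3 by decide] at h; exact h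
  have pe50 : mul (e 5) (e 0) = (45 / 2 ^ 10 : ℝ) • u + (1 / 2 ^ 5 : ℝ) • (x + e 5 + e 0 - e 1 - e 2 - e 3 - e 4) := by have h := he1 5; simp only [show ((5:ZMod 6) + 1) = 0 by decide, show ((5:ZMod 6) + 2) = 1 by decide, show ((5:ZMod 6) + 3) = 2 by decide, show ((5:ZMod 6) + 4) = 3 by decide, show ((5:ZMod 6) + 5) = 4 by decide] at h; exact h
  have pe51 : mul (e 5) (e 1) = -(135 / 2 ^ 10 : ℝ) • u + (1 / 8 : ℝ) • (e 5 + e 1) + (1 / 16 : ℝ) • e 3 := by have h := he2 5; simp only [show ((5:ZMod 6) + 1) = 0 by decide, show ((5:ZMod 6) + 2) = 1 by decide, show ((5:ZMod 6) + 3) = 2 by decide, show ((5:ZMod 6) + 4) = 3 by decide, show ((5:ZMod 6) + 5) = 4 by decide] at h; exact h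
  have pe52 : mul (e 5) (e 2) = (1 / 4 : ℝ) • (e 5 + e 2 - x) := by have h := he3 5; simp only [show ((5:ZMod 6) + 1) = 0 by decide, show ((5:ZMod 6) + 2) = 1 by decide, show ((5:ZMod 6) + 3) = 2 by decide, show ((5:ZMod 6) + 4) = 3 by decide, show ((5:ZMod 6) + 5) = 4 by decide] at h; exact h
  have pe55 : mul (e 5) (e 5) = (2 : ℝ) • e 5 := hee 5
  have pe04 : mul (e 0) (e 4) = -(135 / 2 ^ 10 : ℝ) • u + (1 / 8 : ℝ) • (e 4 + e 0) + (1 / 16 : ℝ) • e 2 := by rw [hcomm]; exact pe40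
  have pe05 : mul (e 0) (e 5) = (45 / 2 ^ 10 : ℝ) • u + (1 / 2 ^ 5 : ℝ) • (x + e 5 + e 0 - e 1 - e 2 - e 3 - e 4) := by rw [hcomm]; exact pe50
  have pe10 : mul (e 1) (e 0) = (45 / 2 ^ 10 : ℝ) • u + (1 / 2 ^ 5 : ℝ) • (x + e 0 + e 1 - e 2 - e 3 - e 4 - e 5) := by rw [hcomm]; exact pe01
  have pe15 : mul (e 1) (e 5) = -(135 / 2 ^ 10 : ℝ) • u + (1 / 8 : ℝ) • (e 5 + e 1) + (1 / 16 : ℝ) • e 3 := by rw [hcomm]; exact pe51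
  have pe20 : mul (e 2) (e 0) = -(135 / 2 ^ 10 : ℝ) • u + (1 / 8 : ℝ) • (e 0 + e 2) + (1 / 16 : ℝ) • e 4 := by rw [hcomm]; exact pe02
  have pe21 : mul (e 2) (e 1) = (45 / 2 ^ 10 : ℝ) • u + (1 / 2 ^ 5 : ℝ) • (x + e 1 + e 2 - e 3 - e 4 - e 5 - e 0) := by rw [hcomm]; exact pe12
  have pe31 : mul (e 3) (e 1) = -(135 / 2 ^ 10 : ℝ) • u + (1 / 8 : ℝ) • (e 1 + e 3) + (1 / 16 : ℝ) • e 5 := by rw [hcomm]; exact pe13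
  have pe32 : mul (e 3) (e 2) = (45 / 2 ^ 10 : ℝ) • u + (1 / 2 ^ 5 : ℝ) • (x + e 2 + e 3 - e 4 - e 5 - e 0 - e 1) := by rw [hcomm]; exact pe23
  have pe42 : mul (e 4) (e 2) = -(135 / 2 ^ 10 : ℝ) • u + (1 / 8 : ℝ) • (e 2 + e 4) + (1 / 16 : ℝ) • e 0 := by rw [hcomm]; exact pe24
  have pe43 : mul (e 4) (e 3) = (45 / 2 ^ 10 : ℝ) • u + (1 / 2 ^ 5 : ℝ) • (x + e 3 + e 4 - e 5 - e 0 - e 1 - e 2) := by rw [hcomm]; exact pe34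
  have pe53 : mul (e 5) (e 3) = -(135 / 2 ^ 10 : ℝ) • u + (1 / 8 : ℝ) • (e 3 + e 5) + (1 / 16 : ℝ) • e 1 := by rw [hcomm]; exact pe35
  have pe54 : mul (e 5) (e 4) = (45 / 2 ^ 10 : ℝ) • u + (1 / 2 ^ 5 : ℝ) • (x + e 4 + e 5 - e 0 - e 1 - e 2 - e 3) := by rw [hcomm]; exact pe45
  have bue0 : B u (e 0) = 1 / 16 := hBue 0
  have beu0 : B (e 0) u = 1 / 16 := by rw [hsymm]; exact bue0
  have bxe0 : B x (e 0) = 1 / 32 := hBxe 0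
  have bex0 : B (e 0) x = 1 / 32 := by rw [hsymm]; exact bxe0
  have bue1 : B u (e 1) = 1 / 16 := hBue 1
  have beu1 : B (e 1) u = 1 / 16 := by rw [hsymm]; exact bue1
  have bxe1 : B x (e 1) = 1 / 32 := hBxe 1
  have bex1 : B (e 1) x = 1 / 32 := by rw [hsymm]; exact bxe1
  have bue2 : B u (e 2) = 1 / 16 := hBue 2
  have beu2 : B (e 2) u = 1 / 16 := by rw [hsymm]; exact bue2
  have bxe2 : B x (e 2) = 1 / 32 := hBxe 2
  have bex2 : B (e 2) x = 1 / 32 := by rw [hsymm]; exact bxe2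
  have bue3 : B u (e 3) = 1 / 16 := hBue 3
  have beu3 : B (e 3) u = 1 / 16 := by rw [hsymm]; exact bue3
  have bxe3 : B x (e 3) = 1 / 32 := hBxe 3
  have bex3 : B (e 3) x = 1 / 32 := by rw [hsymm]; exact bxe3
  have bue4 : B u (e 4) = 1 / 16 := hBue 4
  have beu4 : B (e 4) u = 1 / 16 := by rw [hsymm]; exact bue4
  have bxe4 : B x (e 4) = 1 / 32 := hBxe 4
  have bex4 : B (e 4) x = 1 / 32 := by rw [hsymm]; exact bxe4
  have bue5 : B u (e 5) = 1 / 16 := hBue 5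
  have beu5 : B (e 5) u = 1 / 16 := by rw [hsymm]; exact bue5
  have bxe5 : B x (e 5) = 1 / 32 := hBxe 5
  have bex5 : B (e 5) x = 1 / 32 := by rw [hsymm]; exact bxe5
  have bxu : B x u = 0 := by rw [hsymm]; exact hBux
  have be00 : B (e 0) (e 0) = 1 / 4 := hBee 0
  have be01 : B (e 0) (e 1) = 5 / 2 ^ 10 := by have h := hBe1 0; simp only [show ((0:ZMod 6) + 1) = 1 by decide] at h; exact h
  have be02 : B (e 0) (e 2) = 13 / 2 ^ 10 := by have h := hBe2 0; simp only [show ((0:ZMod 6) + 2) = 2 by decide] at h; exact h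
  have be03 : B (e 0) (e 3) = 1 / 32 := by have h := hBe3 0; simp only [show ((0:ZMod 6) + 3) = 3 by decide] at h; exact h
  have be11 : B (e 1) (e 1) = 1 / 4 := hBee 1
  have be12 : B (e 1) (e 2) = 5 / 2 ^ 10 := by have h := hBe1 1; simp only [show ((1:ZMod 6) + 1) = 2 by decide] at h; exact h
  have be13 : B (e 1) (e 3) = 13 / 2 ^ 10 := by have h := hBe2 1; simp only [show ((1:ZMod 6) + 2) = 3 by decide] at h; exact h
  have be14 : B (e 1) (e 4) = 1 / 32 := by have h := hBe3 1; simp only [show ((1:ZMod 6) + 3) = 4 by decide] at h; exact h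
  have be22 : B (e 2) (e 2) = 1 / 4 := hBee 2
  have be23 : B (e 2) (e 3) = 5 / 2 ^ 10 := by have h := hBe1 2; simp only [show ((2:ZMod 6) + 1) = 3 by decide] at h; exact h
  have be24 : B (e 2) (e 4) = 13 / 2 ^ 10 := by have h := hBe2 2; simp only [show ((2:ZMod 6) + 2) = 4 by decide] at h; exact h
  have be25 : B (e 2) (e 5) = 1 / 32 := by have h := hBe3 2; simp only [show ((2:ZMod 6) + 3) = 5 by decide] at h; exact h
  have be30 : B (e 3) (e 0) = 1 / 32 := by have h := hBe3 3; simp only [show ((3:ZMod 6) + 3) = 0 by decide] at h; exact h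
  have be33 : B (e 3) (e 3) = 1 / 4 := hBee 3
  have be34 : B (e 3) (e 4) = 5 / 2 ^ 10 := by have h := hBe1 3; simp only [show ((3:ZMod 6) + 1) = 4 by decide] at h; exact h
  have be35 : B (e 3) (e 5) = 13 / 2 ^ 10 := by have h := hBe2 3; simp only [show ((3:ZMod 6) + 2) = 5 by decide] at h; exact h
  have be40 : B (e 4) (e 0) = 13 / 2 ^ 10 := by have h := hBe2 4; simp only [show ((4:ZMod 6) + 2) = 0 by decide] at h; exact h
  have be41 : B (e 4) (e 1) = 1 / 32 := by have h := hBe3 4; simp only [show ((4:ZMod 6) + 3) = 1 by decide] at h; exact h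
  have be44 : B (e 4) (e 4) = 1 / 4 := hBee 4
  have be45 : B (e 4) (e 5) = 5 / 2 ^ 10 := by have h := hBe1 4; simp only [show ((4:ZMod 6) + 1) = 5 by decide] at h; exact h
  have be50 : B (e 5) (e 0) = 5 / 2 ^ 10 := by have h := hBe1 5; simp only [show ((5:ZMod 6) + 1) = 0 by decide] at h; exact h
  have be51 : B (e 5) (e 1) = 13 / 2 ^ 10 := by have h := hBe2 5; simp only [show ((5:ZMod 6) + 2) = 1 by decide] at h; exact h
  have be52 : B (e 5) (e 2) = 1 / 32 := by have h := hBe3 5; simp only [show ((5:ZMod 6) + 3) = 2 by decide] at h; exact h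
  have be55 : B (e 5) (e 5) = 1 / 4 := hBee 5
  have be04 : B (e 0) (e 4) = 13 / 2 ^ 10 := by rw [hsymm]; exact be40
  have be05 : B (e 0) (e 5) = 5 / 2 ^ 10 := by rw [hsymm]; exact be50
  have be10 : B (e 1) (e 0) = 5 / 2 ^ 10 := by rw [hsymm]; exact be01
  have be15 : B (e 1) (e 5) = 13 / 2 ^ 10 := by rw [hsymm]; exact be51
  have be20 : B (e 2) (e 0) = 13 / 2 ^ 10 := by rw [hsymm]; exact be02
  have be21 : B (e 2) (e 1) = 5 / 2 ^ 10 := by rw [hsymm]; exact be12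
  have be31 : B (e 3) (e 1) = 13 / 2 ^ 10 := by rw [hsymm]; exact be13
  have be32 : B (e 3) (e 2) = 5 / 2 ^ 10 := by rw [hsymm]; exact be23
  have be42 : B (e 4) (e 2) = 13 / 2 ^ 10 := by rw [hsymm]; exact be24
  have be43 : B (e 4) (e 3) = 5 / 2 ^ 10 := by rw [hsymm]; exact be34
  have be53 : B (e 5) (e 3) = 13 / 2 ^ 10 := by rw [hsymm]; exact be35
  have be54 : B (e 5) (e 4) = 5 / 2 ^ 10 := by rw [hsymm]; exact be45
  refine ⟨?_, ?_, ?_, ?_, ?_, ?_, ?_, ?_, ?_, ?_⟩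
  · simp only [map_add, map_sub, map_neg, map_smul, LinearMap.add_apply, LinearMap.sub_apply, LinearMap.neg_apply, LinearMap.smul_apply, pue0, peu0, pue1, peu1, pue2, peu2, pue3, peu3, pue4, peu4, pue5, peu5, pxe0, pex0, pxe1, pex1, pxe2, pex2, pxe3, pex3, pxe4, pex4, pxe5, pex5, pxu, huu, hxx, hux, pe00, pe01, pe02, pe03, pe11, pe12, pe13, pe14, pe22, pe23, pe24, pe25, pe30, pe33, pe34, pe35, pe40, pe41, pe44, pe45, pe50, pe51, pe52, pe55, pe04, pe05, pe10, pe15, pe20, pe21, pe31, pe32, pe42, pe43, pe53, pe54]; module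
  · simp only [map_add, map_sub, map_neg, map_smul, LinearMap.add_apply, LinearMap.sub_apply, LinearMap.neg_apply, LinearMap.smul_apply, bue0, beu0, bxe0, bex0, bue1, beu1, bxe1, bex1, bue2, beu2, bxe2, bex2, bue3, beu3, bxe3, bex3, bue4, beu4, bxe4, bex4, bue5, beu5, bxe5, bex5, bxu, hBuu, hBxx, hBux, be00, be01, be02, be03, be11, be12, be13, be14, be22, be23, be24, be25, be30, be33, be34, be35, be40, be41, be44, be45, be50, be51, be52, be55, be04, be05, be10, be15, be20, be21, be31, be32, be42, be43, be53, be54]; norm_num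
  · simp only [map_add, map_sub, map_neg, map_smul, LinearMap.add_apply, LinearMap.sub_apply, LinearMap.neg_apply, LinearMap.smul_apply, pue0, peu0, pue1, peu1, pue2, peu2, pue3, peu3, pue4, peu4, pue5, peu5, pxe0, pex0, pxe1, pex1, pxe2, pex2, pxe3, pex3, pxe4, pex4, pxe5, pex5, pxu, huu, hxx, hux, pe00, pe01, pe02, pe03, pe11, pe12, pe13, pe14, pe22, pe23, pe24, pe25, pe30, pe33, pe34, pe35, pe40, pe41, pe44, pe45, pe50, pe51, pe52, pe55, pe04, pe05, pe10, pe15, pe20, pe21, pe31, pe32, pe42, pe43, pe53, pe54]; module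
  · simp only [map_add, map_sub, map_neg, map_smul, LinearMap.add_apply, LinearMap.sub_apply, LinearMap.neg_apply, LinearMap.smul_apply, pue0, peu0, pue1, peu1, pue2, peu2, pue3, peu3, pue4, peu4, pue5, peu5, pxe0, pex0, pxe1, pex1, pxe2, pex2, pxe3, pex3, pxe4, pex4, pxe5, pex5, pxu, huu, hxx, hux, pe00, pe01, pe02, pe03, pe11, pe12, pe13, pe14, pe22, pe23, pe24, pe25, pe30, pe33, pe34, pe35, pe40, pe41, pe44, pe45, pe50, pe51, pe52, pe55, pe04, pe05, pe10, pe15, pe20, pe21, pe31, pe32, pe42, pe43, pe53, pe54]; module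
  · simp only [map_add, map_sub, map_neg, map_smul, LinearMap.add_apply, LinearMap.sub_apply, LinearMap.neg_apply, LinearMap.smul_apply, pue0, peu0, pue1, peu1, pue2, peu2, pue3, peu3, pue4, peu4, pue5, peu5, pxe0, pex0, pxe1, pex1, pxe2, pex2, pxe3, pex3, pxe4, pex4, pxe5, pex5, pxu, huu, hxx, hux, pe00, pe01, pe02, pe03, pe11, pe12, pe13, pe14, pe22, pe23, pe24, pe25, pe30, pe33, pe34, pe35, pe40, pe41, pe44, pe45, pe50, pe51, pe52, pe55, pe04, pe05, pe10, pe15, pe20, pe21, pe31, pe32, pe42, pe43, pe53, pe54]; module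
  · simp only [map_add, map_sub, map_neg, map_smul, LinearMap.add_apply, LinearMap.sub_apply, LinearMap.neg_apply, LinearMap.smul_apply, pue0, peu0, pue1, peu1, pue2, peu2, pue3, peu3, pue4, peu4, pue5, peu5, pxe0, pex0, pxe1, pex1, pxe2, pex2, pxe3, pex3, pxe4, pex4, pxe5, pex5, pxu, huu, hxx, hux, pe00, pe01, pe02, pe03, pe11, pe12, pe13, pe14, pe22, pe23, pe24, pe25, pe30, pe33, pe34, pe35, pe40, pe41, pe44, pe45, pe50, pe51, pe52, pe55, pe04, pe05, pe10, pe15, pe20, pe21, pe31, pe32, pe42, pe43, pe53, pe54]; module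
  · simp only [map_add, map_sub, map_neg, map_smul, LinearMap.add_apply, LinearMap.sub_apply, LinearMap.neg_apply, LinearMap.smul_apply, bue0, beu0, bxe0, bex0, bue1, beu1, bxe1, bex1, bue2, beu2, bxe2, bex2, bue3, beu3, bxe3, bex3, bue4, beu4, bxe4, bex4, bue5, beu5, bxe5, bex5, bxu, hBuu, hBxx, hBux, be00, be01, be02, be03, be11, be12, be13, be14, be22, be23, be24, be25, be30, be33, be34, be35, be40, be41, be44, be45, be50, be51, be52, be55, be04, be05, be10, be15, be20, be21, be31, be32, be42, be43, be53, be54]; norm_num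
  · simp only [map_add, map_sub, map_neg, map_smul, LinearMap.add_apply, LinearMap.sub_apply, LinearMap.neg_apply, LinearMap.smul_apply, bue0, beu0, bxe0, bex0, bue1, beu1, bxe1, bex1, bue2, beu2, bxe2, bex2, bue3, beu3, bxe3, bex3, bue4, beu4, bxe4, bex4, bue5, beu5, bxe5, bex5, bxu, hBuu, hBxx, hBux, be00, be01, be02, be03, be11, be12, be13, be14, be22, be23, be24, be25, be30, be33, be34, be35, be40, be41, be44, be45, be50, be51, be52, be55, be04, be05, be10, be15, be20, be21, be31, be32, be42, be43, be53, be54]; norm_num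
  · simp only [map_add, map_sub, map_neg, map_smul, LinearMap.add_apply, LinearMap.sub_apply, LinearMap.neg_apply, LinearMap.smul_apply, bue0, beu0, bxe0, bex0, bue1, beu1, bxe1, bex1, bue2, beu2, bxe2, bex2, bue3, beu3, bxe3, bex3, bue4, beu4, bxe4, bex4, bue5, beu5, bxe5, bex5, bxu, hBuu, hBxx, hBux, be00, be01, be02, be03, be11, be12, be13, be14, be22, be23, be24, be25, be30, be33, be34, be35, be40, be41, be44, be45, be50, be51, be52, be55, be04, be05, be10, be15, be20, be21, be31, be32, be42, be43, be53, be54]; norm_num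
  · simp only [map_add, map_sub, map_neg, map_smul, LinearMap.add_apply, LinearMap.sub_apply, LinearMap.neg_apply, LinearMap.smul_apply, bue0, beu0, bxe0, bex0, bue1, beu1, bxe1, bex1, bue2, beu2, bxe2, bex2, bue3, beu3, bxe3, bex3, bue4, beu4, bxe4, bex4, bue5, beu5, bxe5, bex5, bxu, hBuu, hBxx, hBux, be00, be01, be02, be03, be11, be12, be13, be14, be22, be23, be24, be25, be30, be33, be34, be35, be40, be41, be44, be45, be50, be51, be52, be55, be04, be05, be10, be15, be20, be21, be31, be32, be42, be43, be53, be54]; norm_num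
end

section
/- Suppose u, x, e_0, …, e_5 satisfy the 6A Griess relations, and let w be a further element of V with (w|u) = 0 and (w|e_0) = (w|e_2) = (w|e_4) = 2^{-5}. Then (w | e_0·(e_2·x)) = 2^{-7}( 7(w|x) − 7(w|e_3) − (w|e_5) + (w|e_1) + 19·2^{-5} ). (In the paper's labels a = e_0, b = e_2, c = τ_a b = e_4, with y = x the central Ising vector and a∘y = e_3, b∘y = e_5, c∘y = e_1, this is Lemma 4.2: (w | a·(b·y)) = 2^{-7}(7(w|y) − 7(w|a∘y) − (w|b∘y) + (w|c∘y) + 19·2^{-5}).) -/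
/-- (Lemma 4.2 at the level of the 6A Griess algebra.) If `w`
satisfies `(w|u) = 0` and `(w|e_0) = (w|e_2) = (w|e_4) = 2^{-5}`, then
`(w | e_0·(e_2·x)) = 2^{-7}(7(w|x) - 7(w|e_3) - (w|e_5) + (w|e_1) + 19·2^{-5})`. -/
theorem stmt_6 (V : Type*) [AddCommGroup V] [Module ℝ V]
    (mul : V →ₗ[ℝ] V →ₗ[ℝ] V)
    (hcomm : ∀ s t : V, mul s t = mul t s)
    (B : V →ₗ[ℝ] V →ₗ[ℝ] ℝ)
    (hsymm : ∀ s t : V, B s t = B t s)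
    (u x : V) (e : ZMod 6 → V)
    (huu : mul u u = (2 : ℝ) • u)
    (hxx : mul x x = (2 : ℝ) • x)
    (hee : ∀ i : ZMod 6, mul (e i) (e i) = (2 : ℝ) • e i)
    (hux : mul u x = 0)
    (hue : ∀ i : ZMod 6, mul u (e i)
        = (5 / 16 : ℝ) • u + (4 / 9 : ℝ) • e i - (2 / 9 : ℝ) • (e (i + 2) + e (i + 4)))
    (hxe : ∀ i : ZMod 6, mul x (e i) = (1 / 4 : ℝ) • (x + e i - e (i + 3)))
    (he1 : ∀ i : ZMod 6, mul (e i) (e (i + 1))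
        = (45 / 2 ^ 10 : ℝ) • u + (1 / 2 ^ 5 : ℝ) •
            (x + e i + e (i + 1) - e (i + 2) - e (i + 3) - e (i + 4) - e (i + 5)))
    (he2 : ∀ i : ZMod 6, mul (e i) (e (i + 2))
        = -(135 / 2 ^ 10 : ℝ) • u + (1 / 8 : ℝ) • (e i + e (i + 2)) + (1 / 16 : ℝ) • e (i + 4))
    (he3 : ∀ i : ZMod 6, mul (e i) (e (i + 3)) = (1 / 4 : ℝ) • (e i + e (i + 3) - x))
    (hBuu : B u u = 2 / 5)
    (hBxx : B x x = 1 / 4)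
    (hBee : ∀ i : ZMod 6, B (e i) (e i) = 1 / 4)
    (hBux : B u x = 0)
    (hBue : ∀ i : ZMod 6, B u (e i) = 1 / 16)
    (hBxe : ∀ i : ZMod 6, B x (e i) = 1 / 32)
    (hBe1 : ∀ i : ZMod 6, B (e i) (e (i + 1)) = 5 / 2 ^ 10)
    (hBe2 : ∀ i : ZMod 6, B (e i) (e (i + 2)) = 13 / 2 ^ 10)
    (hBe3 : ∀ i : ZMod 6, B (e i) (e (i + 3)) = 1 / 32)
    (w : V)
    (hwu : B w u = 0)
    (hw0 : B w (e 0) = 1 / 2 ^ 5)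
    (hw2 : B w (e 2) = 1 / 2 ^ 5)
    (hw4 : B w (e 4) = 1 / 2 ^ 5) :
    B w (mul (e 0) (mul (e 2) x))
      = (1 / 2 ^ 7 : ℝ) *
          (7 * B w x - 7 * B w (e 3) - B w (e 5) + B w (e 1) + 19 / 2 ^ 5) := by
  have c23 : (2 + 3 : ZMod 6) = 5 := by decide
  have c03 : (0 + 3 : ZMod 6) = 3 := by decide
  have c02 : (0 + 2 : ZMod 6) = 2 := by decide
  have c04 : (0 + 4 : ZMod 6) = 4 := by decide
  have c51 : (5 + 1 : ZMod 6) = 0 := by decide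
  have c52 : (5 + 2 : ZMod 6) = 1 := by decide
  have c53 : (5 + 3 : ZMod 6) = 2 := by decide
  have c54 : (5 + 4 : ZMod 6) = 3 := by decide
  have c55 : (5 + 5 : ZMod 6) = 4 := by decide
  have h2x : mul (e 2) x = (1/4 : ℝ) • (x + e 2 - e 5) := by
    rw [hcomm]; have := hxe 2; rw [c23] at this; exact this
  have h0x : mul (e 0) x = (1/4 : ℝ) • (x + e 0 - e 3) := by
    rw [hcomm]; have := hxe 0; rw [c03] at this; exact this
  have h02 : mul (e 0) (e 2)
      = -(135 / 2 ^ 10 : ℝ) • u + (1 / 8 : ℝ) • (e 0 + e 2) + (1 / 16 : ℝ) • e 4 := by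
    have := he2 0; rw [c02, c04] at this; exact this
  have h05 : mul (e 0) (e 5)
      = (45 / 2 ^ 10 : ℝ) • u + (1 / 2 ^ 5 : ℝ) •
        (x + e 5 + e 0 - e 1 - e 2 - e 3 - e 4) := by
    rw [hcomm]; have := he1 5; rw [c51, c52, c53, c54, c55] at this; exact this
  rw [h2x, map_smul, map_sub, map_add, h0x, h02, h05]
  simp only [map_add, map_sub, map_smul, map_neg, smul_eq_mul, hwu, hw0, hw2, hw4]
  ring
end

section
/- Let a, b, x, y be elements of V with (a|b) = 13·2^{-10}, (a|x) = (a|y) = (b|x) = (b|y) = 2^{-5}, (x|y) = 2^{-5}, (a|x·y) = (b|x·y) = 2^{-6}, (x|a·b) = (y|a·b) = 5·2^{-9}, and (x | a·(b·y)) = 13·2^{-11}. Define a∘x = a + x − 4a·x and b∘y = b + y − 4b·y. Then (a∘x | b∘y) = 5·2^{-10}. (This is Proposition 4.3(1): when ⟨a,b⟩ is of 3A-type and ⟨x,y⟩ is of 2A-type, the inner-product values listed are those established in Lemmas 4.1 and 4.2 of the paper, and the conclusion says that a∘x and b∘y generate a 6A-algebra.) -/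
/-- (Proposition 4.3(1).) In a commutative algebra with
invariant symmetric bilinear form, given the listed inner-product values (the
case where `⟨a,b⟩` is of 3A-type and `⟨x,y⟩` of 2A-type), the vectors
`a∘x = a + x - 4a·x` and `b∘y = b + y - 4b·y` satisfy `(a∘x | b∘y) = 5·2^{-10}`. -/
theorem stmt_7 (V : Type*) [AddCommGroup V] [Module ℝ V]
    (mul : V →ₗ[ℝ] V →ₗ[ℝ] V)
    (hcomm : ∀ s t : V, mul s t = mul t s)
    (B : V →ₗ[ℝ] V →ₗ[ℝ] ℝ)
    (hsymm : ∀ s t : V, B s t = B t s)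
    (hinv : ∀ s t w : V, B (mul s t) w = B t (mul s w))
    (a b x y : V)
    (hBab : B a b = 13 / 2 ^ 10)
    (hBax : B a x = 1 / 2 ^ 5) (hBay : B a y = 1 / 2 ^ 5)
    (hBbx : B b x = 1 / 2 ^ 5) (hBby : B b y = 1 / 2 ^ 5)
    (hBxy : B x y = 1 / 2 ^ 5)
    (haxy : B a (mul x y) = 1 / 2 ^ 6) (hbxy : B b (mul x y) = 1 / 2 ^ 6)
    (hxab : B x (mul a b) = 5 / 2 ^ 9) (hyab : B y (mul a b) = 5 / 2 ^ 9)
    (hxaby : B x (mul a (mul b y)) = 13 / 2 ^ 11) :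
    B (a + x - (4 : ℝ) • mul a x) (b + y - (4 : ℝ) • mul b y) = 5 / 2 ^ 10 := by
  have h1 : B a (mul b y) = 5 / 2 ^ 9 := by
    rw [hsymm, hinv, hcomm b a, hyab]
  have h2 : B x (mul b y) = 1 / 2 ^ 6 := by
    rw [hsymm, hinv, hcomm b x, hsymm, hinv, hbxy]
  have h3 : B (mul a x) b = 5 / 2 ^ 9 := by
    rw [hinv, hxab]
  have h4 : B (mul a x) y = 1 / 2 ^ 6 := by
    rw [hcomm a x, hinv, haxy]
  have h5 : B (mul a x) (mul b y) = 13 / 2 ^ 11 := by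
    rw [hinv, hxaby]
  have hxb : B x b = 1 / 2 ^ 5 := by rw [hsymm, hBbx]
  simp only [map_add, map_sub, map_smul, LinearMap.add_apply, LinearMap.sub_apply,
    LinearMap.smul_apply, smul_eq_mul, hBab, hBay, h1, hxb, hBxy, h2, h3, h4, h5]
  norm_num
end

section
/- Let a, b, x, y be elements of V with (a|b) = 13·2^{-10}, (a|x) = (a|y) = (b|x) = (b|y) = 2^{-5}, (x|y) = 13·2^{-10}, (a|x·y) = (b|x·y) = 5·2^{-9}, (x|a·b) = (y|a·b) = 5·2^{-9}, and (x | a·(b·y)) = 83·2^{-14}. Define a∘x = a + x − 4a·x and b∘y = b + y − 4b·y. Then (a∘x | b∘y) = 13·2^{-10}. (This is Proposition 4.3(2): when both ⟨a,b⟩ and ⟨x,y⟩ are of 3A-type, the inner-product values listed are those established in Lemmas 4.1 and 4.2 of the paper, and the conclusion says that a∘x and b∘y generate a 3A-algebra.) -/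
/-- (Proposition 4.3(2).) In a commutative algebra with
invariant symmetric bilinear form, given the listed inner-product values (the
case where both `⟨a,b⟩` and `⟨x,y⟩` are of 3A-type), the vectors
`a∘x = a + x - 4a·x` and `b∘y = b + y - 4b·y` satisfy `(a∘x | b∘y) = 13·2^{-10}`. -/
theorem stmt_8 (V : Type*) [AddCommGroup V] [Module ℝ V]
    (mul : V →ₗ[ℝ] V →ₗ[ℝ] V)
    (hcomm : ∀ s t : V, mul s t = mul t s)
    (B : V →ₗ[ℝ] V →ₗ[ℝ] ℝ)
    (hsymm : ∀ s t : V, B s t = B t s)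
    (hinv : ∀ s t w : V, B (mul s t) w = B t (mul s w))
    (a b x y : V)
    (hBab : B a b = 13 / 2 ^ 10)
    (hBax : B a x = 1 / 2 ^ 5) (hBay : B a y = 1 / 2 ^ 5)
    (hBbx : B b x = 1 / 2 ^ 5) (hBby : B b y = 1 / 2 ^ 5)
    (hBxy : B x y = 13 / 2 ^ 10)
    (haxy : B a (mul x y) = 5 / 2 ^ 9) (hbxy : B b (mul x y) = 5 / 2 ^ 9)
    (hxab : B x (mul a b) = 5 / 2 ^ 9) (hyab : B y (mul a b) = 5 / 2 ^ 9)
    (hxaby : B x (mul a (mul b y)) = 83 / 2 ^ 14) :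
    B (a + x - (4 : ℝ) • mul a x) (b + y - (4 : ℝ) • mul b y) = 13 / 2 ^ 10 := by
  have h0 : B x b = 1 / 2 ^ 5 := by rw [hsymm, hBbx]
  have h1 : B a (mul b y) = 5 / 2 ^ 9 := by
    rw [hsymm, hinv, hcomm b a, hyab]
  have h2 : B x (mul b y) = 5 / 2 ^ 9 := by
    rw [hsymm, hinv, hcomm b x, hsymm, hinv, hbxy]
  have h3 : B (mul a x) b = 5 / 2 ^ 9 := by rw [hinv, hxab]
  have h4 : B (mul a x) y = 5 / 2 ^ 9 := by
    rw [hcomm a x, hinv, haxy]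
  have h5 : B (mul a x) (mul b y) = 83 / 2 ^ 14 := by rw [hinv, hxaby]
  simp only [map_sub, map_add, map_smul, LinearMap.sub_apply, LinearMap.add_apply,
    LinearMap.smul_apply, smul_eq_mul, hBab, hBay, h0, hBxy, h1, h2, h3, h4, h5]
  norm_num
end

section
/- Let a, x, p, q, r be elements of V with a·p = (1/4)(a + p − x), (a|p) = 2^{-5}, (a|q) = (a|r) = 5·2^{-10}, (x|q) = 5·2^{-10}, and (p|q) = 13·2^{-10}. Then (a | (2^6/135)(2p + 2q + r − 16 p·q)) = 1/80. (This is Lemma 4.10: with p = a∘x, q = b∘y, r = c∘z in the configuration of nine Ising vectors of Section 4.2, the element (2^6/135)(2p + 2q + r − 16 p·q) is the characteristic c = 4/5 Virasoro vector u_{a∘x, b∘y}, and every one of the six Ising vectors a, b, c, x, y, z pairs with it to 1/80; the stated case is (a | u_{a∘x,b∘y}) = 1/80.) -/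
/-- (Lemma 4.10.) In a commutative algebra with invariant
symmetric bilinear form, if `a·p = (1/4)(a + p - x)`, `(a|p) = 2^{-5}`,
`(a|q) = (a|r) = 5·2^{-10}`, `(x|q) = 5·2^{-10}` and `(p|q) = 13·2^{-10}`, then
`(a | (2^6/135)(2p + 2q + r - 16p·q)) = 1/80`. -/
theorem stmt_9 (V : Type*) [AddCommGroup V] [Module ℝ V]
    (mul : V →ₗ[ℝ] V →ₗ[ℝ] V)
    (hcomm : ∀ s t : V, mul s t = mul t s)
    (B : V →ₗ[ℝ] V →ₗ[ℝ] ℝ)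
    (hsymm : ∀ s t : V, B s t = B t s)
    (hinv : ∀ s t w : V, B (mul s t) w = B t (mul s w))
    (a x p q r : V)
    (hap : mul a p = (1 / 4 : ℝ) • (a + p - x))
    (hBap : B a p = 1 / 2 ^ 5)
    (hBaq : B a q = 5 / 2 ^ 10) (hBar : B a r = 5 / 2 ^ 10)
    (hBxq : B x q = 5 / 2 ^ 10)
    (hBpq : B p q = 13 / 2 ^ 10) :
    B a ((2 ^ 6 / 135 : ℝ) •
        ((2 : ℝ) • p + (2 : ℝ) • q + r - (16 : ℝ) • mul p q)) = 1 / 80 := by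
  have key : B a (mul p q) = 13 / 2 ^ 12 := by
    rw [hsymm, hinv, hcomm p a, hap]
    simp only [map_smul, map_add, map_sub, smul_eq_mul]
    rw [hsymm q a, hsymm q p, hsymm q x, hBaq, hBpq, hBxq]
    norm_num
  simp only [map_smul, map_add, map_sub, smul_eq_mul, hBap, hBaq, hBar, key]
  norm_num
end

section
/- For every integer n ≥ 1, let G be the symmetric matrix over ℚ whose rows and columns are indexed by the 2-element subsets of {0, 1, …, n}, with entries G_{T,T} = 1/4, G_{T,T'} = 1/32 whenever |T ∩ T'| = 1, and G_{T,T'} = 0 whenever T ∩ T' = ∅. Then G is positive definite (in particular nonsingular). -/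
/-- (Gram matrix of Proposition 4.15.) For `n ≥ 1`, the
symmetric matrix indexed by the 2-element subsets of `{0, 1, …, n}` with
diagonal entries `1/4`, entries `1/32` for subsets meeting in one point, and
`0` for disjoint subsets, is positive definite. -/
theorem stmt_10 (n : ℕ) (hn : 1 ≤ n)
    (G : Matrix {s : Finset (Fin (n + 1)) // s.card = 2}
      {s : Finset (Fin (n + 1)) // s.card = 2} ℚ)
    (hG : ∀ T T', G T T' =
      if T = T' then 1 / 4
      else if (T.1 ∩ T'.1).card = 1 then 1 / 32
      else 0) :
    G.PosDef := by
  -- if T ≠ T' then the intersection has at most one element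
  have key : ∀ T T' : {s : Finset (Fin (n + 1)) // s.card = 2}, T ≠ T' →
      (T.1 ∩ T'.1).card ≤ 1 := by
    intro T T' h
    by_contra hc
    push_neg at hc
    have hsub : T.1 ∩ T'.1 ⊆ T.1 := Finset.inter_subset_left
    have hle : (T.1 ∩ T'.1).card ≤ T.1.card := Finset.card_le_card hsub
    have h2 : (T.1 ∩ T'.1).card = 2 := by rw [T.2] at hle; omega
    have heq : T.1 ∩ T'.1 = T.1 :=
      Finset.eq_of_subset_of_card_le hsub (by rw [T.2, h2])
    have hsub' : T.1 ⊆ T'.1 := by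
      rw [← heq]; exact Finset.inter_subset_right
    have : T.1 = T'.1 :=
      Finset.eq_of_subset_of_card_le hsub' (by rw [T.2, T'.2])
    exact h (Subtype.ext this)
  -- the incidence matrix
  set M : Matrix {s : Finset (Fin (n + 1)) // s.card = 2} (Fin (n + 1)) ℚ :=
    fun T i => if i ∈ T.1 then 1 else 0 with hM
  have hMM : ∀ T T', (M * M.conjTranspose) T T' = ((T.1 ∩ T'.1).card : ℚ) := by
    intro T T'
    have step : ∀ i : Fin (n + 1),
        M T i * star (M T' i) = if i ∈ T.1 ∩ T'.1 then (1 : ℚ) else 0 := by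
      intro i
      by_cases h1 : i ∈ T.1 <;> by_cases h2 : i ∈ T'.1 <;>
        simp [hM, h1, h2, Finset.mem_inter]
    rw [Matrix.mul_apply]
    simp only [Matrix.conjTranspose_apply]
    rw [Finset.sum_congr rfl fun i _ => step i, Finset.sum_ite_mem,
      Finset.univ_inter, Finset.sum_const, nsmul_eq_mul, mul_one]
  have hG' : G = (1 / 32 : ℚ) • (M * M.conjTranspose) +
      Matrix.diagonal (fun _ => (3 / 16 : ℚ)) := by
    ext T T'
    rw [hG]
    simp only [Matrix.add_apply, Matrix.smul_apply, hMM, Matrix.diagonal_apply,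
      smul_eq_mul]
    by_cases h : T = T'
    · subst h
      have h2 : (T.1 ∩ T.1).card = 2 := by rw [Finset.inter_self]; exact T.2
      rw [if_pos rfl, h2]; norm_num
    · have h1 := key T T' h
      have hne : T ≠ T' := h
      by_cases h2 : (T.1 ∩ T'.1).card = 1
      · simp [h, hne, h2]
      · have h0 : (T.1 ∩ T'.1).card = 0 := by omega
        simp [h, hne, h2, h0]
  rw [hG']
  have hps : ((1 / 32 : ℚ) • (M * M.conjTranspose)).PosSemidef := by
    have h0 := Matrix.posSemidef_self_mul_conjTranspose M
    refine ⟨?_, fun x => ?_⟩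
    · show _ = _
      rw [Matrix.conjTranspose_smul, h0.1.eq, star_trivial]
    · exact (h0.smul (by norm_num : (0 : ℚ) ≤ 1 / 32)).2 x
  exact Matrix.PosDef.posSemidef_add hps (Matrix.PosDef.diagonal fun _ => by norm_num)
end

section
/- With the Gram matrix G of the 13 symbols u; a, b, c; a′, b′, c′; a″, b″, c″; x, y, z as specified, the vector η = (1/6)u + (16/27)(a + b + c + a′ + b′ + c′ + a″ + b″ + c″) + (4/9)(x + y + z) satisfies G(η, t) = G(t, t) for each of the 13 basis symbols t, and 2·G(η, η) = 52/15. (This is the conformal-vector computation of Theorem 4.6: η is the conformal vector of ⟨a,b,x,y⟩ and has central charge 52/15.) -/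
/-- Pairing of an index symbol (`x = 10`, `y = 11`, `z = 12`) with a letter
symbol `l` (letters `a,b,c` are `1,2,3`, `a′,b′,c′` are `4,5,6`, and
`a″,b″,c″` are `7,8,9`). -/
def idxLetter12 (idx l : Fin 13) : ℚ :=
  if idx.val = 10 then (if l.val ≤ 6 then 1 / 32 else 0)
  else if idx.val = 11 then (if l.val ≤ 3 ∨ 7 ≤ l.val then 1 / 32 else 0)
  else (if 4 ≤ l.val then 1 / 32 else 0)

/-- The 13×13 Gram matrix of Theorem 4.6, with rows and columns indexed by
`u` (index 0); the letter symbols `a,b,c` (1,2,3), `a′,b′,c′` (4,5,6),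
`a″,b″,c″` (7,8,9); and `x, y, z` (10, 11, 12).  A letter symbol `t` with
`1 ≤ t ≤ 9` lies in triple `(t-1)/3` and carries letter `(t-1) % 3`. -/
def gram12 : Matrix (Fin 13) (Fin 13) ℚ := Matrix.of fun i j =>
  if i = j then (if i.val = 0 then 2 / 5 else 1 / 4)
  else if i.val = 0 then (if j.val ≤ 9 then 1 / 16 else 0)
  else if j.val = 0 then (if i.val ≤ 9 then 1 / 16 else 0)
  else if i.val ≤ 9 ∧ j.val ≤ 9 then
    (if (i.val - 1) / 3 = (j.val - 1) / 3 then 13 / 2 ^ 10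
     else if (i.val - 1) % 3 = (j.val - 1) % 3 then 1 / 32
     else 5 / 2 ^ 10)
  else if j.val ≤ 9 then idxLetter12 i j
  else if i.val ≤ 9 then idxLetter12 j i
  else 1 / 32

/-- The coefficient vector of `η = (1/6)u + (16/27)(a + b + c + a′ + b′ + c′ +
a″ + b″ + c″) + (4/9)(x + y + z)`. -/
def eta12 : Fin 13 → ℚ := fun i =>
  if i.val = 0 then 1 / 6 else if i.val ≤ 9 then 16 / 27 else 4 / 9

set_option maxHeartbeats 2000000 in
/-- (Conformal vector of Theorem 4.6.) The vector `η`
satisfies `G(η, t) = G(t, t)` for each of the 13 basis symbols `t`, and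
`2·G(η, η) = 52/15` (central charge `52/15`). -/
theorem stmt_12 :
    (∀ t : Fin 13, Matrix.vecMul eta12 gram12 t = gram12 t t) ∧
    2 * dotProduct eta12 (gram12.mulVec eta12) = 52 / 15 := by
  constructor
  · intro t
    fin_cases t <;>
      (simp (config := { decide := true }) [Matrix.vecMul, dotProduct,
        gram12, eta12, idxLetter12, Fin.sum_univ_succ]; norm_num)
  · simp (config := { decide := true }) [Matrix.mulVec, dotProduct,
      gram12, eta12, idxLetter12, Fin.sum_univ_succ]
    norm_num
end

section
/- Let B be the symmetric bilinear pairing on formal linear combinations of the 18 symbols u_1, u_2, u_3, u_4; a, b, c, x, y, z; and t∘w for t ∈ {a,b,c}, w ∈ {x,y,z}, determined by: B(u_i,u_i) = 2/5, B(u_i,u_j) = 0 for i ≠ j; B(u_1,t) = 1/16 for t ∈ {a,b,c}, B(u_1,t) = 0 for t ∈ {x,y,z}; B(u_2,t) = 0 for t ∈ {a,b,c}, B(u_2,t) = 1/16 for t ∈ {x,y,z}; B(u_3,t) = B(u_4,t) = 1/80 for all six singles t; B(u_i,p) = 1/16 for every composite p and i = 1,2,3,4; diagonal entries 1/4 for all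 singles and composites; B = 13/2^10 within {a,b,c} and within {x,y,z}; B = 1/32 between a letter single and an index single; between a single s and a composite t∘w, B = 1/32 if s = t or s = w and B = 5/2^10 otherwise; B = 13/2^10 between any two distinct composites. Set η = (17/22)(u_1 + u_2) + (10/11)(u_3 + u_4) + (16/33)(a + b + c + x + y + z). Then B(η, t) = B(t, t) for each of the 18 symbols t, and 2·B(η, η) = 228/55. (This is Proposition 4.13: η is the conformal vector of ⟨a,b,x,y⟩ when both ⟨a,b⟩ and ⟨x,y⟩ are 3A-algebras, and it has central charge 228/55.) -/
/-- Pairing of a single symbol `s` (`a,b,c` are `4,5,6`; `x,y,z` are `7,8,9`)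
with a composite symbol `t∘w` encoded as `k` with `10 ≤ k ≤ 18`, whose letter
component is `(k-10)/3 ∈ {a,b,c}` and whose index component is
`(k-10) % 3 ∈ {x,y,z}`: it is `1/32` if `s = t` or `s = w`, else `5/2^10`. -/
def singleComp14 (s k : Fin 19) : ℚ :=
  if (s.val ≤ 6 ∧ s.val - 4 = (k.val - 10) / 3) ∨
      (7 ≤ s.val ∧ s.val - 7 = (k.val - 10) % 3) then 1 / 32
  else 5 / 2 ^ 10

/-- Pairing of `u_1, u_2, u_3, u_4` (indices `0,1,2,3`) with a non-`u` symbol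
`j`: `1/16` with every composite; `u_1` pairs to `1/16` with `a,b,c` and `0`
with `x,y,z`; `u_2` the other way round; `u_3` and `u_4` pair to `1/80` with
all six singles. -/
def uRow14 (i j : Fin 19) : ℚ :=
  if 10 ≤ j.val then 1 / 16
  else if i.val = 0 then (if j.val ≤ 6 then 1 / 16 else 0)
  else if i.val = 1 then (if j.val ≤ 6 then 0 else 1 / 16)
  else 1 / 80

/-- The bilinear pairing of Proposition 4.13 / Theorem 4.14 on the symbols
`u_1, u_2, u_3, u_4` (0,1,2,3); the six singles `a, b, c` (4,5,6) and
`x, y, z` (7,8,9); and the nine composites `t∘w`, `t ∈ {a,b,c}`,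
`w ∈ {x,y,z}` (indices `10 + 3·t + w`). -/
def gram14 : Matrix (Fin 19) (Fin 19) ℚ := Matrix.of fun i j =>
  if i = j then (if i.val ≤ 3 then 2 / 5 else 1 / 4)
  else if i.val ≤ 3 then (if j.val ≤ 3 then 0 else uRow14 i j)
  else if j.val ≤ 3 then uRow14 j i
  else if i.val ≤ 9 ∧ j.val ≤ 9 then
    (if (i.val ≤ 6 ↔ j.val ≤ 6) then 13 / 2 ^ 10 else 1 / 32)
  else if i.val ≤ 9 then singleComp14 i j
  else if j.val ≤ 9 then singleComp14 j i
  else 13 / 2 ^ 10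

/-- The coefficient vector of
`η = (17/22)(u_1 + u_2) + (10/11)(u_3 + u_4) + (16/33)(a + b + c + x + y + z)`. -/
def eta14 : Fin 19 → ℚ := fun i =>
  if i.val ≤ 1 then 17 / 22
  else if i.val ≤ 3 then 10 / 11
  else if i.val ≤ 9 then 16 / 33
  else 0

set_option maxHeartbeats 2000000 in
/-- (Proposition 4.13.) With respect to the pairing `B` of
Theorem 4.14, the vector `η` satisfies `B(η, t) = B(t, t)` for every symbol
`t`, and `2·B(η, η) = 228/55` (central charge `228/55`). -/
theorem stmt_14 :
    (∀ t : Fin 19, Matrix.vecMul eta14 gram14 t = gram14 t t) ∧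
    2 * dotProduct eta14 (gram14.mulVec eta14) = 228 / 55 := by
  constructor
  · intro t
    fin_cases t <;>
      · simp only [Matrix.vecMul, dotProduct, Fin.sum_univ_succ, Finset.univ_unique,
          Fin.sum_univ_zero, gram14, eta14, uRow14, singleComp14, Matrix.of_apply,
          Fin.ext_iff, Fin.val_succ, Fin.isValue]
        norm_num
  · simp only [Matrix.mulVec, Matrix.vecMul, dotProduct, Fin.sum_univ_succ,
      Fin.sum_univ_zero, gram14, eta14, uRow14, singleComp14, Matrix.of_apply,
      Fin.ext_iff, Fin.val_succ, Fin.isValue]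
    norm_num
end

section
/- Fix an integer n ≥ 1 and let B be the symmetric bilinear pairing on formal linear combinations of the symbols u; a_i, b_i, c_i for 0 ≤ i ≤ n; x_i for 1 ≤ i ≤ n; and z_{jk} for 1 ≤ j < k ≤ n, determined by the values listed in the context. Set ω_n = (3(3−n)/(2(n+7)))·u + (16/(3(n+7)))·Σ_{i=0}^{n}(a_i + b_i + c_i) + (4/(n+7))·( Σ_{i=1}^{n} x_i + Σ_{1≤j<k≤n} z_{jk} ). Then B(ω_n, t) = B(t, t) for every symbol t, and 2·B(ω_n, ω_n) = (n+2)(5n+29)/(5(n+7)). (This is the conformal-vector computation of Theorem 4.17: ω_n is the conformal vector of the (2A,3A)-generated subalgebra X^[n] = ⟨a, b, x^1, …, x^n⟩ and has central charge (n+2)(5n+29)/(5(n+7)).) -/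
/-- The index set of the spanning set of the Griess algebra of
`X^[n] = ⟨a, b, x^1, …, x^n⟩` (Theorem 4.17): `Sum.inl ()` is `u`; a pair
`(ℓ, i)` with `ℓ : Fin 3`, `i : Fin (n+1)` is `a_i`, `b_i`, `c_i` (for
`ℓ = 0, 1, 2` respectively, where `a_0 = a`, `a_i = a∘x^i` for `i ≥ 1`,
etc.); `j : Fin n` is `x_{j+1}`; and a pair `⟨(j, k), h⟩` with `j < k` is
`z_{(j+1)(k+1)} = x^{j+1}∘x^{k+1}`. -/
abbrev Sym15 (n : ℕ) :=
  Unit ⊕ (Fin 3 × Fin (n + 1)) ⊕ Fin n ⊕ {p : Fin n × Fin n // p.1 < p.2}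

/-- The symmetric bilinear pairing of Theorem 4.17 on the symbols `Sym15 n`. -/
def B15 (n : ℕ) : Sym15 n → Sym15 n → ℚ
  | Sum.inl _, Sum.inl _ => 2 / 5
  | Sum.inl _, Sum.inr (Sum.inl _) => 1 / 16
  | Sum.inr (Sum.inl _), Sum.inl _ => 1 / 16
  | Sum.inl _, _ => 0
  | _, Sum.inl _ => 0
  | Sum.inr (Sum.inl (l, i)), Sum.inr (Sum.inl (l', i')) =>
      if l = l' ∧ i = i' then 1 / 4
      else if i = i' then 13 / 2 ^ 10
      else if l = l' then 1 / 32
      else 5 / 2 ^ 10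
  | Sum.inr (Sum.inl (_, i)), Sum.inr (Sum.inr (Sum.inl j)) =>
      if i.val = 0 ∨ i.val = j.val + 1 then 1 / 32 else 0
  | Sum.inr (Sum.inr (Sum.inl j)), Sum.inr (Sum.inl (_, i)) =>
      if i.val = 0 ∨ i.val = j.val + 1 then 1 / 32 else 0
  | Sum.inr (Sum.inl (_, i)), Sum.inr (Sum.inr (Sum.inr ⟨(j, k), _⟩)) =>
      if i.val = j.val + 1 ∨ i.val = k.val + 1 then 1 / 32 else 0
  | Sum.inr (Sum.inr (Sum.inr ⟨(j, k), _⟩)), Sum.inr (Sum.inl (_, i)) =>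
      if i.val = j.val + 1 ∨ i.val = k.val + 1 then 1 / 32 else 0
  | Sum.inr (Sum.inr (Sum.inl j)), Sum.inr (Sum.inr (Sum.inl j')) =>
      if j = j' then 1 / 4 else 1 / 32
  | Sum.inr (Sum.inr (Sum.inl j)), Sum.inr (Sum.inr (Sum.inr ⟨(l, m), _⟩)) =>
      if j = l ∨ j = m then 1 / 32 else 0
  | Sum.inr (Sum.inr (Sum.inr ⟨(l, m), _⟩)), Sum.inr (Sum.inr (Sum.inl j)) =>
      if j = l ∨ j = m then 1 / 32 else 0
  | Sum.inr (Sum.inr (Sum.inr ⟨(j, k), _⟩)), Sum.inr (Sum.inr (Sum.inr ⟨(l, m), _⟩)) =>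
      if j = l ∧ k = m then 1 / 4
      else if j = l ∨ j = m ∨ k = l ∨ k = m then 1 / 32
      else 0

/-- The coefficient vector of the conformal vector
`ω_n = (3(3−n)/(2(n+7)))·u + (16/(3(n+7)))·Σ(a_i + b_i + c_i)
     + (4/(n+7))·(Σ x_i + Σ z_{jk})`. -/
def omega15 (n : ℕ) : Sym15 n → ℚ
  | Sum.inl _ => 3 * (3 - (n : ℚ)) / (2 * ((n : ℚ) + 7))
  | Sum.inr (Sum.inl _) => 16 / (3 * ((n : ℚ) + 7))
  | Sum.inr (Sum.inr _) => 4 / ((n : ℚ) + 7)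

section helpers
variable {N : ℕ}

lemma ite_one_split (a : Fin N) (va c : ℚ) :
    ∑ j : Fin N, (if j = a then va else c) = N * c + va - c := by
  have h : ∀ j : Fin N, (if j = a then va else c) = c + (if j = a then va - c else 0) := by
    intro j; split_ifs <;> ring
  simp_rw [h, Finset.sum_add_distrib, Finset.sum_const, Finset.sum_ite_eq', Finset.mem_univ,
    if_true, Finset.card_univ, Fintype.card_fin, nsmul_eq_mul]
  ring

lemma ite_two_split (a b : Fin N) (hab : a ≠ b) (va vb c : ℚ) :
    ∑ j : Fin N, (if j = a then va else if j = b then vb else c)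
      = N * c + va + vb - 2 * c := by
  have h : ∀ j : Fin N, (if j = a then va else if j = b then vb else c)
      = c + (if j = a then va - c else 0) + (if j = b then vb - c else 0) := by
    intro j
    rcases eq_or_ne j a with rfl | hja
    · simp only [if_pos rfl, if_neg hab, if_true]
      ring
    · rcases eq_or_ne j b with rfl | hjb <;> simp [hja, *]
  simp_rw [h, Finset.sum_add_distrib, Finset.sum_const, Finset.sum_ite_eq', Finset.mem_univ,
    if_true, Finset.card_univ, Fintype.card_fin, nsmul_eq_mul]
  ring

lemma sum_ite_or (a b : Fin N) (hab : a ≠ b) (c : ℚ) :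
    ∑ j : Fin N, (if j = a ∨ j = b then c else 0) = 2 * c := by
  have h : ∀ j : Fin N, (if j = a ∨ j = b then c else 0)
      = if j = a then c else if j = b then c else 0 := by
    intro j; split_ifs <;> tauto
  rw [Finset.sum_congr rfl fun j _ => h j, ite_two_split a b hab]; ring

lemma sum_lt (g : Fin N → Fin N → ℚ) (hg : ∀ j k, g j k = g k j) :
    ∑ p : {p : Fin N × Fin N // p.1 < p.2}, g p.1.1 p.1.2
      = ((∑ j : Fin N, ∑ k : Fin N, g j k) - ∑ j : Fin N, g j j) / 2 := by
  have h1 : ∑ p : {p : Fin N × Fin N // p.1 < p.2}, g p.1.1 p.1.2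
      = ∑ j : Fin N, ∑ k : Fin N, if j < k then g j k else 0 := by
    rw [← Finset.sum_subtype (Finset.univ.filter fun p : Fin N × Fin N => p.1 < p.2)
      (by simp) (fun p => g p.1 p.2), Finset.sum_filter, Fintype.sum_prod_type]
  have h2 : ∑ j : Fin N, ∑ k : Fin N, (if k < j then g j k else 0)
      = ∑ j : Fin N, ∑ k : Fin N, (if j < k then g j k else 0) := by
    rw [Finset.sum_comm]
    refine Finset.sum_congr rfl fun j _ => Finset.sum_congr rfl fun k _ => ?_
    rw [hg]
  have h3 : ∀ j k : Fin N, g j k = (if j < k then g j k else 0)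
      + (if k < j then g j k else 0) + (if j = k then g j k else 0) := by
    intro j k
    rcases lt_trichotomy j k with h | h | h
    · simp [h, lt_asymm h, h.ne]
    · simp [h, lt_irrefl]
    · simp [h, lt_asymm h, (h.ne).symm, h.ne']
  have h4 : ∑ j : Fin N, ∑ k : Fin N, (if j = k then g j k else 0) = ∑ j : Fin N, g j j := by
    refine Finset.sum_congr rfl fun j _ => ?_
    simp [Finset.sum_ite_eq]
  have h5 : ∑ j : Fin N, ∑ k : Fin N, g j k
      = 2 * (∑ j : Fin N, ∑ k : Fin N, (if j < k then g j k else 0)) + ∑ j : Fin N, g j j := by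
    calc ∑ j : Fin N, ∑ k : Fin N, g j k
        = ∑ j : Fin N, ∑ k : Fin N, ((if j < k then g j k else 0)
            + (if k < j then g j k else 0) + (if j = k then g j k else 0)) := by
          refine Finset.sum_congr rfl fun j _ => Finset.sum_congr rfl fun k _ => h3 j k
      _ = _ := by
          simp_rw [Finset.sum_add_distrib]
          rw [h2, h4]; ring
  rw [h1]; rw [h5]; ring

end helpers

section zsums
variable {N : ℕ}

lemma zsum_const (c : ℚ) :
    ∑ _p : {p : Fin N × Fin N // p.1 < p.2}, c = ((N : ℚ) * N * c - N * c) / 2 := by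
  have h := sum_lt (N := N) (fun _ _ => c) (fun _ _ => rfl)
  simpa [mul_assoc] using h

lemma zsum_mem (a : Fin N) (c : ℚ) :
    ∑ p : {p : Fin N × Fin N // p.1 < p.2},
      (if a = p.1.1 ∨ a = p.1.2 then c else 0) = ((N : ℚ) - 1) * c := by
  rw [sum_lt (fun j k => if a = j ∨ a = k then c else 0)
    (fun j k => by apply if_congr (by tauto) rfl rfl)]
  have hin : ∀ j : Fin N, (∑ k : Fin N, if a = j ∨ a = k then c else 0)
      = if j = a then (N : ℚ) * c else c := by
    intro j
    rcases eq_or_ne j a with rfl | hja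
    · simp [Finset.sum_const, Finset.card_univ, mul_comm]
    · rw [if_neg hja]
      have h : ∀ k : Fin N, (if a = j ∨ a = k then c else 0) = if k = a then c else 0 := by
        intro k; apply if_congr _ rfl rfl
        constructor
        · rintro (h | h)
          exacts [absurd h.symm hja, h.symm]
        · exact fun h => Or.inr h.symm
      rw [Finset.sum_congr rfl fun k _ => h k]
      simp [Finset.sum_ite_eq']
  rw [Finset.sum_congr rfl fun j _ => hin j, ite_one_split]
  have hd : ∀ j : Fin N, (if a = j ∨ a = j then c else 0) = if j = a then c else 0 := by
    intro j; apply if_congr _ rfl rfl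
    constructor
    · rintro (h | h) <;> exact h.symm
    · exact fun h => Or.inl h.symm
  rw [Finset.sum_congr rfl fun j _ => hd j]
  simp only [Finset.sum_ite_eq', Finset.mem_univ, if_true]
  ring

set_option maxHeartbeats 1000000 in
lemma zsum_zz (l m : Fin N) (hlm : l < m) :
    ∑ p : {p : Fin N × Fin N // p.1 < p.2},
      (if p.1.1 = l ∧ p.1.2 = m then (1/4 : ℚ)
        else if p.1.1 = l ∨ p.1.1 = m ∨ p.1.2 = l ∨ p.1.2 = m then 1/32 else 0)
      = 1/4 + ((N : ℚ) - 2)/16 := by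
  have hlm' : l ≠ m := hlm.ne
  set g : Fin N → Fin N → ℚ := fun j k =>
    if (j = l ∧ k = m) ∨ (j = m ∧ k = l) then (1/4 : ℚ)
      else if j = l ∨ j = m ∨ k = l ∨ k = m then 1/32 else 0 with hgdef
  have hcongr : ∑ p : {p : Fin N × Fin N // p.1 < p.2},
      (if p.1.1 = l ∧ p.1.2 = m then (1/4 : ℚ)
        else if p.1.1 = l ∨ p.1.1 = m ∨ p.1.2 = l ∨ p.1.2 = m then 1/32 else 0)
      = ∑ p : {p : Fin N × Fin N // p.1 < p.2}, g p.1.1 p.1.2 := by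
    refine Finset.sum_congr rfl fun p _ => ?_
    obtain ⟨⟨j, k⟩, hjk⟩ := p
    simp only [hgdef]
    apply if_congr _ rfl rfl
    constructor
    · rintro ⟨rfl, rfl⟩; exact Or.inl ⟨rfl, rfl⟩
    · rintro (⟨rfl, rfl⟩ | ⟨rfl, rfl⟩)
      · exact ⟨rfl, rfl⟩
      · exact absurd hlm (lt_asymm hjk)
  rw [hcongr, sum_lt g (fun j k => by
    simp only [hgdef]; apply if_congr (by tauto) rfl (if_congr (by tauto) rfl rfl))]
  have hin : ∀ j : Fin N, (∑ k : Fin N, g j k)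
      = if j = l then (N : ℚ)/32 + 1/4 - 1/32
        else if j = m then (N : ℚ)/32 + 1/4 - 1/32
        else 1/16 := by
    intro j
    by_cases hjl : j = l
    · subst hjl
      rw [if_pos rfl]
      have h : ∀ k : Fin N, g j k = if k = m then (1/4 : ℚ) else 1/32 := by
        intro k; simp only [hgdef]
        by_cases hkm : k = m
        · subst hkm; simp
        · have hjm : j ≠ m := hlm'
          simp [hkm, hjm]
      rw [Finset.sum_congr rfl fun k _ => h k, ite_one_split]
      ring
    · by_cases hjm : j = m
      · subst hjm
        rw [if_neg hjl, if_pos rfl]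
        have h : ∀ k : Fin N, g j k = if k = l then (1/4 : ℚ) else 1/32 := by
          intro k; simp only [hgdef]
          by_cases hkl : k = l
          · subst hkl; simp [hjl]
          · simp [hkl, hjl]
        rw [Finset.sum_congr rfl fun k _ => h k, ite_one_split]
        ring
      · rw [if_neg hjl, if_neg hjm]
        have h : ∀ k : Fin N, g j k = if k = l ∨ k = m then (1/32 : ℚ) else 0 := by
          intro k; simp only [hgdef]
          split_ifs <;> first | rfl | (exfalso; tauto)
        rw [Finset.sum_congr rfl fun k _ => h k, sum_ite_or l m hlm']
        norm_num
  have hd : ∀ j : Fin N, g j j = if j = l ∨ j = m then (1/32 : ℚ) else 0 := by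
    intro j; simp only [hgdef]
    have h1 : ¬((j = l ∧ j = m) ∨ (j = m ∧ j = l)) := by
      rintro (⟨rfl, rfl⟩ | ⟨rfl, rfl⟩) <;> exact hlm' rfl
    rw [if_neg h1]
    exact if_congr (by tauto) rfl rfl
  rw [Finset.sum_congr rfl fun j _ => hin j]
  rw [Finset.sum_congr rfl fun j _ => hd j]
  rw [ite_two_split l m hlm', sum_ite_or l m hlm']
  ring

end zsums


set_option maxHeartbeats 1600000 in
/-- (Conformal vector of Theorem 4.17.) For every `n ≥ 1`,
the vector `ω_n` satisfies `B(ω_n, t) = B(t, t)` for every symbol `t`, and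
`2·B(ω_n, ω_n) = (n+2)(5n+29)/(5(n+7))`. -/
theorem stmt_15 (n : ℕ) (hn : 1 ≤ n) :
    (∀ t : Sym15 n, (∑ s : Sym15 n, omega15 n s * B15 n s t) = B15 n t t) ∧
    2 * (∑ s : Sym15 n, ∑ t : Sym15 n, omega15 n s * omega15 n t * B15 n s t)
      = ((n : ℚ) + 2) * (5 * (n : ℚ) + 29) / (5 * ((n : ℚ) + 7)) := by
  have h7 : ((n : ℚ) + 7) ≠ 0 := by positivity
  set wu : ℚ := 3 * (3 - (n : ℚ)) / (2 * ((n : ℚ) + 7)) with hwu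
  set wa : ℚ := 16 / (3 * ((n : ℚ) + 7)) with hwa
  set wx : ℚ := 4 / ((n : ℚ) + 7) with hwx
  have hsum : ∀ f : Sym15 n → ℚ, (∑ s : Sym15 n, f s)
      = f (Sum.inl ())
        + (∑ l : Fin 3, ∑ i : Fin (n+1), f (.inr (.inl (l, i))))
        + (∑ j : Fin n, f (.inr (.inr (.inl j))))
        + (∑ p : {p : Fin n × Fin n // p.1 < p.2}, f (.inr (.inr (.inr p)))) := by
    intro f
    rw [Fintype.sum_sum_type, Fintype.sum_sum_type, Fintype.sum_sum_type, Fintype.sum_prod_type]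
    simp [add_assoc]
  have H1 : ∀ t : Sym15 n, (∑ s : Sym15 n, omega15 n s * B15 n s t) = B15 n t t := by
    intro t
    rw [hsum]
    rcases t with u | ⟨l', i'⟩ | j' | ⟨⟨lz, mz⟩, hz⟩
    · -- t = u
      have e2 : (∑ l : Fin 3, ∑ i : Fin (n+1),
          omega15 n (.inr (.inl (l, i))) * B15 n (.inr (.inl (l, i))) (Sum.inl u))
          = 3 * ((n : ℚ) + 1) * (wa * (1/16)) := by
        have h : ∀ (l : Fin 3) (i : Fin (n+1)),
            omega15 n (.inr (.inl (l, i))) * B15 n (.inr (.inl (l, i))) (Sum.inl u)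
            = wa * (1/16) := fun l i => rfl
        simp_rw [h, Finset.sum_const, Finset.card_univ, Fintype.card_fin, nsmul_eq_mul]
        push_cast; ring
      have e3 : (∑ j : Fin n,
          omega15 n (.inr (.inr (.inl j))) * B15 n (.inr (.inr (.inl j))) (Sum.inl u)) = 0 := by
        refine Finset.sum_eq_zero fun j _ => ?_
        show wx * 0 = 0; ring
      have e4 : (∑ p : {p : Fin n × Fin n // p.1 < p.2},
          omega15 n (.inr (.inr (.inr p))) * B15 n (.inr (.inr (.inr p))) (Sum.inl u)) = 0 := by
        refine Finset.sum_eq_zero fun p _ => ?_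
        obtain ⟨⟨j, k⟩, h⟩ := p
        show wx * 0 = 0; ring
      rw [e2, e3, e4]
      show wu * (2/5) + 3 * ((n : ℚ) + 1) * (wa * (1/16)) + 0 + 0 = 2/5
      rw [hwu, hwa]; field_simp; ring
    · -- t = a-type (l', i')
      have e2 : (∑ l : Fin 3, ∑ i : Fin (n+1),
          omega15 n (.inr (.inl (l, i))) * B15 n (.inr (.inl (l, i))) (.inr (.inl (l', i'))))
          = 3 * (wa * (((n : ℚ)+1) * (5/1024) + 13/1024 - 5/1024))
              + wa * (((n : ℚ)+1) * (1/32) + 1/4 - 1/32)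
              - wa * (((n : ℚ)+1) * (5/1024) + 13/1024 - 5/1024) := by
        have hrow : ∀ l : Fin 3, (∑ i : Fin (n+1),
            omega15 n (.inr (.inl (l, i))) * B15 n (.inr (.inl (l, i))) (.inr (.inl (l', i'))))
            = if l = l' then wa * (((n : ℚ)+1) * (1/32) + 1/4 - 1/32)
              else wa * (((n : ℚ)+1) * (5/1024) + 13/1024 - 5/1024) := by
          intro l
          by_cases h : l = l'
          · subst h
            rw [if_pos rfl]
            have hp : ∀ i : Fin (n+1),
                omega15 n (.inr (.inl (l, i))) * B15 n (.inr (.inl (l, i))) (.inr (.inl (l, i')))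
                = if i = i' then wa * (1/4) else wa * (1/32) := by
              intro i
              show wa * (if l = l ∧ i = i' then (1/4 : ℚ) else if i = i' then 13/2^10
                  else if l = l then 1/32 else 5/2^10) = _
              by_cases hi : i = i' <;> simp [hi]
            rw [Finset.sum_congr rfl fun i _ => hp i, ite_one_split]
            push_cast; ring
          · rw [if_neg h]
            have hp : ∀ i : Fin (n+1),
                omega15 n (.inr (.inl (l, i))) * B15 n (.inr (.inl (l, i))) (.inr (.inl (l', i')))
                = if i = i' then wa * (13/1024) else wa * (5/1024) := by
              intro i
              show wa * (if l = l' ∧ i = i' then (1/4 : ℚ) else if i = i' then 13/2^10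
                  else if l = l' then 1/32 else 5/2^10) = _
              by_cases hi : i = i' <;> simp [hi, h] <;> norm_num
            rw [Finset.sum_congr rfl fun i _ => hp i, ite_one_split]
            push_cast; ring
        rw [Finset.sum_congr rfl fun l _ => hrow l, ite_one_split]
        push_cast; ring
      have hBtt : B15 n (.inr (.inl (l', i'))) (.inr (.inl (l', i'))) = 1/4 := by
        show (if l' = l' ∧ i' = i' then (1/4 : ℚ) else if i' = i' then 13/2^10
            else if l' = l' then 1/32 else 5/2^10) = 1/4
        simp
      rw [hBtt, e2]
      -- chunks 3 and 4 depend on whether i' = 0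
      induction i' using Fin.cases with
      | zero =>
        have e3 : (∑ j : Fin n, omega15 n (.inr (.inr (.inl j)))
            * B15 n (.inr (.inr (.inl j))) (.inr (.inl (l', 0)))) = (n : ℚ) * (wx * (1/32)) := by
          have hp : ∀ j : Fin n, omega15 n (.inr (.inr (.inl j)))
              * B15 n (.inr (.inr (.inl j))) (.inr (.inl (l', 0))) = wx * (1/32) := by
            intro j
            show wx * (if (0 : Fin (n+1)).val = 0 ∨ (0 : Fin (n+1)).val = j.val + 1
                then (1/32 : ℚ) else 0) = _
            simp
          simp_rw [hp, Finset.sum_const, Finset.card_univ, Fintype.card_fin, nsmul_eq_mul]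
        have e4 : (∑ p : {p : Fin n × Fin n // p.1 < p.2},
            omega15 n (.inr (.inr (.inr p)))
            * B15 n (.inr (.inr (.inr p))) (.inr (.inl (l', 0)))) = 0 := by
          refine Finset.sum_eq_zero fun p _ => ?_
          obtain ⟨⟨j, k⟩, h⟩ := p
          show wx * (if (0 : Fin (n+1)).val = j.val + 1 ∨ (0 : Fin (n+1)).val = k.val + 1
              then (1/32 : ℚ) else 0) = 0
          simp
        rw [e3, e4]
        show wu * (1/16) + _ + _ + 0 = 1/4
        rw [hwu, hwa, hwx]; field_simp; ring
      | succ m =>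
        have e3 : (∑ j : Fin n, omega15 n (.inr (.inr (.inl j)))
            * B15 n (.inr (.inr (.inl j))) (.inr (.inl (l', m.succ)))) = wx * (1/32) := by
          have hp : ∀ j : Fin n, omega15 n (.inr (.inr (.inl j)))
              * B15 n (.inr (.inr (.inl j))) (.inr (.inl (l', m.succ)))
              = if j = m then wx * (1/32) else 0 := by
            intro j
            show wx * (if (m.succ : Fin (n+1)).val = 0 ∨ (m.succ : Fin (n+1)).val = j.val + 1
                then (1/32 : ℚ) else 0) = _
            have hiff : ((m.succ : Fin (n+1)).val = 0 ∨ (m.succ : Fin (n+1)).val = j.val + 1)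
                ↔ j = m := by
              simp only [Fin.val_succ]
              constructor
              · rintro (h | h)
                · omega
                · exact (Fin.ext (by omega)).symm
              · rintro rfl; exact Or.inr rfl
            rw [if_congr hiff rfl rfl]
            split_ifs <;> ring
          rw [Finset.sum_congr rfl fun j _ => hp j]
          simp [Finset.sum_ite_eq']
        have e4 : (∑ p : {p : Fin n × Fin n // p.1 < p.2},
            omega15 n (.inr (.inr (.inr p)))
            * B15 n (.inr (.inr (.inr p))) (.inr (.inl (l', m.succ))))
            = ((n : ℚ) - 1) * (wx * (1/32)) := by
          have hp : ∀ p : {p : Fin n × Fin n // p.1 < p.2},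
              omega15 n (.inr (.inr (.inr p)))
              * B15 n (.inr (.inr (.inr p))) (.inr (.inl (l', m.succ)))
              = if m = p.1.1 ∨ m = p.1.2 then wx * (1/32) else 0 := by
            rintro ⟨⟨j, k⟩, h⟩
            show wx * (if (m.succ : Fin (n+1)).val = j.val + 1 ∨ (m.succ : Fin (n+1)).val = k.val + 1
                then (1/32 : ℚ) else 0) = _
            have hiff : ((m.succ : Fin (n+1)).val = j.val + 1 ∨ (m.succ : Fin (n+1)).val = k.val + 1)
                ↔ (m = j ∨ m = k) := by
              simp only [Fin.val_succ]
              constructor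
              · rintro (h | h)
                exacts [Or.inl (Fin.ext (by omega)), Or.inr (Fin.ext (by omega))]
              · rintro (rfl | rfl)
                exacts [Or.inl rfl, Or.inr rfl]
            rw [if_congr hiff rfl rfl]
            split_ifs <;> ring
          rw [Finset.sum_congr rfl fun p _ => hp p, zsum_mem m (wx * (1/32))]
        rw [e3, e4]
        show wu * (1/16) + _ + _ + _ = 1/4
        rw [hwu, hwa, hwx]; field_simp; ring
    · -- t = x_{j'}
      have e2 : (∑ l : Fin 3, ∑ i : Fin (n+1),
          omega15 n (.inr (.inl (l, i))) * B15 n (.inr (.inl (l, i))) (.inr (.inr (.inl j'))))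
          = 3 * (2 * (wa * (1/32))) := by
        have hrow : ∀ l : Fin 3, (∑ i : Fin (n+1),
            omega15 n (.inr (.inl (l, i))) * B15 n (.inr (.inl (l, i))) (.inr (.inr (.inl j'))))
            = 2 * (wa * (1/32)) := by
          intro l
          have hp : ∀ i : Fin (n+1),
              omega15 n (.inr (.inl (l, i))) * B15 n (.inr (.inl (l, i))) (.inr (.inr (.inl j')))
              = if i = 0 ∨ i = j'.succ then wa * (1/32) else 0 := by
            intro i
            show wa * (if i.val = 0 ∨ i.val = j'.val + 1 then (1/32 : ℚ) else 0) = _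
            have hiff : (i.val = 0 ∨ i.val = j'.val + 1) ↔ (i = 0 ∨ i = j'.succ) := by
              simp only [Fin.ext_iff, Fin.val_succ, Fin.val_zero]
            rw [if_congr hiff rfl rfl]
            split_ifs <;> ring
          rw [Finset.sum_congr rfl fun i _ => hp i,
            sum_ite_or 0 j'.succ (Fin.succ_ne_zero j').symm]
        rw [Finset.sum_congr rfl fun l _ => hrow l]
        simp [Finset.sum_const]
      have e3 : (∑ j : Fin n, omega15 n (.inr (.inr (.inl j)))
          * B15 n (.inr (.inr (.inl j))) (.inr (.inr (.inl j'))))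
          = (n : ℚ) * (wx * (1/32)) + wx * (1/4) - wx * (1/32) := by
        have hp : ∀ j : Fin n, omega15 n (.inr (.inr (.inl j)))
            * B15 n (.inr (.inr (.inl j))) (.inr (.inr (.inl j')))
            = if j = j' then wx * (1/4) else wx * (1/32) := by
          intro j
          show wx * (if j = j' then (1/4 : ℚ) else 1/32) = _
          split_ifs <;> ring
        rw [Finset.sum_congr rfl fun j _ => hp j, ite_one_split]
      have e4 : (∑ p : {p : Fin n × Fin n // p.1 < p.2},
          omega15 n (.inr (.inr (.inr p)))
          * B15 n (.inr (.inr (.inr p))) (.inr (.inr (.inl j'))))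
          = ((n : ℚ) - 1) * (wx * (1/32)) := by
        have hp : ∀ p : {p : Fin n × Fin n // p.1 < p.2},
            omega15 n (.inr (.inr (.inr p)))
            * B15 n (.inr (.inr (.inr p))) (.inr (.inr (.inl j')))
            = if j' = p.1.1 ∨ j' = p.1.2 then wx * (1/32) else 0 := by
          rintro ⟨⟨j, k⟩, h⟩
          show wx * (if j' = j ∨ j' = k then (1/32 : ℚ) else 0) = _
          split_ifs <;> ring
        rw [Finset.sum_congr rfl fun p _ => hp p, zsum_mem j' (wx * (1/32))]
      have hBtt : B15 n (.inr (.inr (.inl j'))) (.inr (.inr (.inl j'))) = 1/4 := by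
        show (if j' = j' then (1/4 : ℚ) else 1/32) = 1/4
        simp
      rw [hBtt, e2, e3, e4]
      show wu * 0 + _ + _ + _ = 1/4
      rw [hwu, hwa, hwx]; field_simp; ring
    · -- t = z_{(lz, mz)}
      have hlm : lz < mz := hz
      have hlm' : lz ≠ mz := hlm.ne
      have e2 : (∑ l : Fin 3, ∑ i : Fin (n+1),
          omega15 n (.inr (.inl (l, i)))
          * B15 n (.inr (.inl (l, i))) (.inr (.inr (.inr ⟨(lz, mz), hz⟩))))
          = 3 * (2 * (wa * (1/32))) := by
        have hrow : ∀ l : Fin 3, (∑ i : Fin (n+1),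
            omega15 n (.inr (.inl (l, i)))
            * B15 n (.inr (.inl (l, i))) (.inr (.inr (.inr ⟨(lz, mz), hz⟩))))
            = 2 * (wa * (1/32)) := by
          intro l
          have hp : ∀ i : Fin (n+1),
              omega15 n (.inr (.inl (l, i)))
              * B15 n (.inr (.inl (l, i))) (.inr (.inr (.inr ⟨(lz, mz), hz⟩)))
              = if i = lz.succ ∨ i = mz.succ then wa * (1/32) else 0 := by
            intro i
            show wa * (if i.val = lz.val + 1 ∨ i.val = mz.val + 1 then (1/32 : ℚ) else 0) = _
            have hiff : (i.val = lz.val + 1 ∨ i.val = mz.val + 1)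
                ↔ (i = lz.succ ∨ i = mz.succ) := by
              simp [Fin.ext_iff, Fin.val_succ]
            rw [if_congr hiff rfl rfl]
            split_ifs <;> ring
          rw [Finset.sum_congr rfl fun i _ => hp i,
            sum_ite_or lz.succ mz.succ (fun h => hlm' (Fin.succ_injective n h)) (wa * (1/32))]
        rw [Finset.sum_congr rfl fun l _ => hrow l]
        simp [Finset.sum_const]
      have e3 : (∑ j : Fin n, omega15 n (.inr (.inr (.inl j)))
          * B15 n (.inr (.inr (.inl j))) (.inr (.inr (.inr ⟨(lz, mz), hz⟩))))
          = 2 * (wx * (1/32)) := by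
        have hp : ∀ j : Fin n, omega15 n (.inr (.inr (.inl j)))
            * B15 n (.inr (.inr (.inl j))) (.inr (.inr (.inr ⟨(lz, mz), hz⟩)))
            = if j = lz ∨ j = mz then wx * (1/32) else 0 := by
          intro j
          show wx * (if j = lz ∨ j = mz then (1/32 : ℚ) else 0) = _
          split_ifs <;> ring
        rw [Finset.sum_congr rfl fun j _ => hp j, sum_ite_or lz mz hlm']
      have e4 : (∑ p : {p : Fin n × Fin n // p.1 < p.2},
          omega15 n (.inr (.inr (.inr p)))
          * B15 n (.inr (.inr (.inr p))) (.inr (.inr (.inr ⟨(lz, mz), hz⟩))))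
          = wx * (1/4 + ((n : ℚ) - 2)/16) := by
        have hp : ∀ p : {p : Fin n × Fin n // p.1 < p.2},
            omega15 n (.inr (.inr (.inr p)))
            * B15 n (.inr (.inr (.inr p))) (.inr (.inr (.inr ⟨(lz, mz), hz⟩)))
            = wx * (if p.1.1 = lz ∧ p.1.2 = mz then (1/4 : ℚ)
                else if p.1.1 = lz ∨ p.1.1 = mz ∨ p.1.2 = lz ∨ p.1.2 = mz then 1/32 else 0) := by
          rintro ⟨⟨j, k⟩, h⟩
          rfl
        rw [Finset.sum_congr rfl fun p _ => hp p, ← Finset.mul_sum, zsum_zz lz mz hlm]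
      have hBtt : B15 n (.inr (.inr (.inr ⟨(lz, mz), hz⟩)))
          (.inr (.inr (.inr ⟨(lz, mz), hz⟩))) = 1/4 := by
        show (if lz = lz ∧ mz = mz then (1/4 : ℚ)
            else if lz = lz ∨ lz = mz ∨ mz = lz ∨ mz = mz then 1/32 else 0) = 1/4
        simp
      rw [hBtt, e2, e3, e4]
      show wu * 0 + _ + _ + _ = 1/4
      rw [hwu, hwa, hwx]; field_simp; ring
  refine ⟨H1, ?_⟩
  have hswap : (∑ s : Sym15 n, ∑ t : Sym15 n, omega15 n s * omega15 n t * B15 n s t)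
      = ∑ t : Sym15 n, omega15 n t * B15 n t t := by
    rw [Finset.sum_comm]
    refine Finset.sum_congr rfl fun t _ => ?_
    rw [← H1 t, Finset.mul_sum]
    exact Finset.sum_congr rfl fun s _ => by ring
  rw [hswap, hsum]
  have e2 : (∑ l : Fin 3, ∑ i : Fin (n+1),
      omega15 n (.inr (.inl (l, i))) * B15 n (.inr (.inl (l, i))) (.inr (.inl (l, i))))
      = 3 * ((n : ℚ) + 1) * (wa * (1/4)) := by
    have hp : ∀ (l : Fin 3) (i : Fin (n+1)),
        omega15 n (.inr (.inl (l, i))) * B15 n (.inr (.inl (l, i))) (.inr (.inl (l, i)))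
        = wa * (1/4) := by
      intro l i
      show wa * (if l = l ∧ i = i then (1/4 : ℚ) else if i = i then 13/2^10
          else if l = l then 1/32 else 5/2^10) = _
      simp
    simp_rw [hp, Finset.sum_const, Finset.card_univ, Fintype.card_fin, nsmul_eq_mul]
    push_cast; ring
  have e3 : (∑ j : Fin n, omega15 n (.inr (.inr (.inl j)))
      * B15 n (.inr (.inr (.inl j))) (.inr (.inr (.inl j)))) = (n : ℚ) * (wx * (1/4)) := by
    have hp : ∀ j : Fin n, omega15 n (.inr (.inr (.inl j)))
        * B15 n (.inr (.inr (.inl j))) (.inr (.inr (.inl j))) = wx * (1/4) := by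
      intro j
      show wx * (if j = j then (1/4 : ℚ) else 1/32) = _
      simp
    simp_rw [hp, Finset.sum_const, Finset.card_univ, Fintype.card_fin, nsmul_eq_mul]
  have e4 : (∑ p : {p : Fin n × Fin n // p.1 < p.2},
      omega15 n (.inr (.inr (.inr p))) * B15 n (.inr (.inr (.inr p))) (.inr (.inr (.inr p))))
      = ((n : ℚ) * n * (wx * (1/4)) - (n : ℚ) * (wx * (1/4))) / 2 := by
    have hp : ∀ p : {p : Fin n × Fin n // p.1 < p.2},
        omega15 n (.inr (.inr (.inr p))) * B15 n (.inr (.inr (.inr p))) (.inr (.inr (.inr p)))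
        = wx * (1/4) := by
      rintro ⟨⟨j, k⟩, h⟩
      show wx * (if j = j ∧ k = k then (1/4 : ℚ)
          else if j = j ∨ j = k ∨ k = j ∨ k = k then 1/32 else 0) = _
      simp
    rw [Finset.sum_congr rfl fun p _ => hp p, zsum_const (wx * (1/4))]
  rw [e2, e3, e4]
  show 2 * (wu * (2/5) + 3 * ((n : ℚ) + 1) * (wa * (1/4)) + (n : ℚ) * (wx * (1/4))
      + (((n : ℚ) * n * (wx * (1/4)) - (n : ℚ) * (wx * (1/4))) / 2)) = _
  rw [hwu, hwa, hwx]; field_simp; ring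
end

section
/- Suppose u, a, b, c satisfy the 3A Griess relations, and set v = −(5/14)u + (16/21)(a + b + c). Then a·u = (2/3)a + (5/24)u − (7/24)v and a·v = (4/3)a − (5/24)u + (7/24)v. -/
/-- In the Griess algebra of the dihedral 3A-algebra, with
`v = -(5/14)u + (16/21)(a+b+c)` the characteristic `c = 6/7` Virasoro vector,
one has `a·u = (2/3)a + (5/24)u - (7/24)v` and `a·v = (4/3)a - (5/24)u + (7/24)v`. -/
theorem stmt_18 (V : Type*) [AddCommGroup V] [Module ℝ V]
    (mul : V →ₗ[ℝ] V →ₗ[ℝ] V)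
    (hcomm : ∀ s t : V, mul s t = mul t s)
    (B : V →ₗ[ℝ] V →ₗ[ℝ] ℝ)
    (hsymm : ∀ s t : V, B s t = B t s)
    (u a b c : V)
    (huu : mul u u = (2 : ℝ) • u)
    (haa : mul a a = (2 : ℝ) • a)
    (hbb : mul b b = (2 : ℝ) • b)
    (hcc : mul c c = (2 : ℝ) • c)
    (hab : mul a b = -(135 / 2 ^ 10 : ℝ) • u + (1 / 8 : ℝ) • (a + b) + (1 / 16 : ℝ) • c)
    (hbc : mul b c = -(135 / 2 ^ 10 : ℝ) • u + (1 / 8 : ℝ) • (b + c) + (1 / 16 : ℝ) • a)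
    (hca : mul c a = -(135 / 2 ^ 10 : ℝ) • u + (1 / 8 : ℝ) • (c + a) + (1 / 16 : ℝ) • b)
    (hua : mul u a = (5 / 16 : ℝ) • u + (4 / 9 : ℝ) • a - (2 / 9 : ℝ) • (b + c))
    (hub : mul u b = (5 / 16 : ℝ) • u + (4 / 9 : ℝ) • b - (2 / 9 : ℝ) • (c + a))
    (huc : mul u c = (5 / 16 : ℝ) • u + (4 / 9 : ℝ) • c - (2 / 9 : ℝ) • (a + b))
    (hBuu : B u u = 2 / 5)
    (hBaa : B a a = 1 / 4) (hBbb : B b b = 1 / 4) (hBcc : B c c = 1 / 4)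
    (hBab : B a b = 13 / 2 ^ 10) (hBbc : B b c = 13 / 2 ^ 10) (hBca : B c a = 13 / 2 ^ 10)
    (hBua : B u a = 1 / 16) (hBub : B u b = 1 / 16) (hBuc : B u c = 1 / 16) :
    ∀ v : V, v = -(5 / 14 : ℝ) • u + (16 / 21 : ℝ) • (a + b + c) →
      mul a u = (2 / 3 : ℝ) • a + (5 / 24 : ℝ) • u - (7 / 24 : ℝ) • v ∧
      mul a v = (4 / 3 : ℝ) • a - (5 / 24 : ℝ) • u + (7 / 24 : ℝ) • v := by
  intro v hv
  have hau : mul a u = (5 / 16 : ℝ) • u + (4 / 9 : ℝ) • a - (2 / 9 : ℝ) • (b + c) := by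
    rw [hcomm a u]; exact hua
  have hac : mul a c = -(135 / 2 ^ 10 : ℝ) • u + (1 / 8 : ℝ) • (c + a) + (1 / 16 : ℝ) • b := by
    rw [hcomm a c]; exact hca
  have hav : mul a v = (4 / 3 : ℝ) • a - (5 / 24 : ℝ) • u + (7 / 24 : ℝ) • v := by
    subst hv
    simp only [map_add, map_smul, map_neg, hau, haa, hab, hac]
    module
  refine ⟨?_, hav⟩
  subst hv
  rw [hau]; module
end
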